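/- arXiv:1806.08262 — 3 statements merged into one kernel-verified Lean document; each statement's English description precedes it below -/
import Mathlib

section
/- There is a universal constant C > 0 with the following property. Let d be an even positive integer, let δ ≤ d/4, let a and L be positive integers with d = aL and 1 ≤ a < δ, let m_1,…,m_K ∈ ℂ^d be masks whose nonzero entries all lie in positions {1,…,δ} with ‖m‖_∞ := max_{1≤k≤K} ‖m_k‖_∞ > 0, and let 0 < p ≤ q. Suppose B : ℝ^{K×L} → ℂ^d satisfies D₂(B(y), B(y′)) ≤ C_B‖y − y′‖₂ for all y, y′ ∈ ℝ^{K×L} and B(Z(x)) ∼ x for every x ∈ C_{p,q}. Then C_B ≥ C·q·√(d·a) / (p·√K·‖m‖_∞·δ^{3/2}). -/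
open scoped BigOperators

noncomputable section

/-- Map an integer to `Fin d` by reduction mod `d` (requires `0 < d`). -/
def intToFin (d : ℕ) (hd : 0 < d) (z : ℤ) : Fin d :=
  ⟨(z % (d : ℤ)).toNat, by
    have h1 : 0 ≤ z % (d : ℤ) := Int.emod_nonneg z (by exact_mod_cast hd.ne')
    have h2 : z % (d : ℤ) < (d : ℤ) := Int.emod_lt_of_pos z (by exact_mod_cast hd)
    omega⟩

/-- Circular shift: `(S_ℓ x)(n) = x(((n + ℓ - 1) mod d) + 1)` in 1-based indexing. -/
def shift {d : ℕ} (ℓ : ℤ) (x : Fin d → ℂ) : Fin d → ℂ :=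
  fun i => x (intToFin d i.pos ((i : ℤ) + ℓ))

/-- `⟨u,v⟩ = ∑ u(n) conj(v(n))`. -/
def innerC {d : ℕ} (u v : Fin d → ℂ) : ℂ := ∑ n, u n * (starRingEnd ℂ) (v n)

/-- `x ∼ x'` iff `x = e^{iθ} x'` for some real `θ`. -/
def phaseEquiv {d : ℕ} (x x' : Fin d → ℂ) : Prop :=
  ∃ θ : ℝ, x = fun n => Complex.exp (θ * Complex.I) * x' n

/-- Euclidean norm on `ℂ^d`. -/
def norm2 {d : ℕ} (x : Fin d → ℂ) : ℝ := Real.sqrt (∑ n, ‖x n‖ ^ 2)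

/-- `D₂(x,x') = min_θ ‖x - e^{iθ} x'‖₂`. -/
def D2 {d : ℕ} (x x' : Fin d → ℂ) : ℝ :=
  ⨅ θ : ℝ, norm2 (fun n => x n - Complex.exp (θ * Complex.I) * x' n)

/-- `C_{p,q} = {x : p ≤ |x(n)| ≤ q for all n}`. -/
def Cpq (d : ℕ) (p q : ℝ) : Set (Fin d → ℂ) :=
  {x | ∀ n, p ≤ ‖x n‖ ∧ ‖x n‖ ≤ q}

/-- `‖m‖_∞ = max_k ‖m_k‖_∞`. -/
def maskSup {d K : ℕ} (m : Fin K → Fin d → ℂ) : ℝ :=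
  ⨆ k, ⨆ n, ‖m k n‖

/-- The measurement map `Z(x)_{k,ℓ} = |⟨S_{ℓa} m_k, x⟩|`, `1 ≤ k ≤ K`, `1 ≤ ℓ ≤ L`. -/
def Zmap {d K : ℕ} (L : ℕ) (m : Fin K → Fin d → ℂ) (a : ℕ) (x : Fin d → ℂ) :
    EuclideanSpace ℝ (Fin K × Fin L) :=
  WithLp.toLp 2 fun kl => ‖innerC (shift ((((kl.2 : ℕ) + 1) * a : ℕ) : ℤ) (m kl.1)) x‖

/-- The measurement map `Y(x)_{k,ℓ} = |⟨S_{ℓa} m_k, x⟩|²`. -/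
def Ymap {d K : ℕ} (L : ℕ) (m : Fin K → Fin d → ℂ) (a : ℕ) (x : Fin d → ℂ) :
    EuclideanSpace ℝ (Fin K × Fin L) :=
  WithLp.toLp 2 fun kl => ‖innerC (shift ((((kl.2 : ℕ) + 1) * a : ℕ) : ℤ) (m kl.1)) x‖ ^ 2

/-- The vectors `x^{±}` (sign `ε = ±1`): `q` on positions `1,…,d/2-δ`, `p` on
`d/2-δ+1,…,d/2`, `±q` on `d/2+1,…,d-δ`, and `p` on `d-δ+1,…,d`. -/
def xpm (d δ : ℕ) (p q ε : ℝ) : Fin d → ℂ :=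
  fun i => if (i : ℕ) < d / 2 - δ then (q : ℂ)
    else if (i : ℕ) < d / 2 then (p : ℂ)
    else if (i : ℕ) < d - δ then ((ε * q : ℝ) : ℂ)
    else (p : ℂ)

/-- The difference of outer products `x x^* - x' x'^*`. -/
def outerDiff {d : ℕ} (x x' : Fin d → ℂ) : Matrix (Fin d) (Fin d) ℂ :=
  Matrix.of fun i j => x i * star (x j) - x' i * star (x' j)

lemma outerDiff_isHermitian {d : ℕ} (x x' : Fin d → ℂ) :
    (outerDiff x x').IsHermitian := by
  unfold Matrix.IsHermitian
  ext i j
  simp [outerDiff, Matrix.conjTranspose_apply, star_sub, star_mul, star_star, mul_comm]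

/-- `d₁(x,x') = ‖x x^* - x' x'^*‖₁`, the sum of the singular values (for a Hermitian
matrix, the sum of the absolute values of its eigenvalues). -/
def d1 {d : ℕ} (x x' : Fin d → ℂ) : ℝ :=
  ∑ i, |(outerDiff_isHermitian x x').eigenvalues i|

/-! ### Auxiliary lemmas -/

lemma intToFin_val' (d : ℕ) (hd : 0 < d) (x t : ℕ) :
    ((intToFin d hd ((x:ℤ) + (t:ℕ)) : Fin d) : ℕ) = (x + t) % d := by
  simp only [intToFin]
  have h : ((x:ℤ) + (t:ℕ)) = ((x + t : ℕ) : ℤ) := by push_cast; ring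
  rw [h]
  omega

lemma modsmall' (d y : ℕ) (hd : 0 < d) (h : y < 2 * d) :
    y % d = if d ≤ y then y - d else y := by
  split_ifs with h'
  · rw [Nat.mod_eq_sub_mod h', Nat.mod_eq_of_lt (by omega)]
  · exact Nat.mod_eq_of_lt (by omega)

def wv (d δ : ℕ) (p q ε : ℝ) : ℕ → ℝ := fun i =>
  if i < d / 2 - δ then q else if i < d / 2 then p else if i < d - δ then ε * q else p

lemma xpm_eq_wv (d δ : ℕ) (p q ε : ℝ) (n : Fin d) :
    xpm d δ p q ε n = ((wv d δ p q ε (n : ℕ) : ℝ) : ℂ) := by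
  unfold xpm wv; split_ifs <;> norm_num

lemma abs_one_add_sq' (c : ℂ) (hc : ‖c‖ = 1) :
    ‖1 - c‖ ^ 2 + ‖1 + c‖ ^ 2 = 4 := by
  have h : Complex.normSq c = 1 := by rw [← Complex.sq_norm, hc]; norm_num
  rw [Complex.sq_norm, Complex.sq_norm]
  simp only [Complex.normSq_apply, Complex.sub_re, Complex.sub_im, Complex.add_re,
    Complex.add_im, Complex.one_re, Complex.one_im] at *
  ring_nf; ring_nf at h; linarith

lemma xpm_mem_Cpq (d δ : ℕ) (p q : ℝ) (hp : 0 < p) (hpq : p ≤ q) (ε : ℝ)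
    (hε : ε = 1 ∨ ε = -1) : xpm d δ p q ε ∈ Cpq d p q := by
  have hq : 0 < q := lt_of_lt_of_le hp hpq
  intro n
  unfold xpm
  split_ifs
  · rw [Complex.norm_real, Real.norm_eq_abs, abs_of_pos hq]; exact ⟨hpq, le_refl q⟩
  · rw [Complex.norm_real, Real.norm_eq_abs, abs_of_pos hp]; exact ⟨le_refl p, hpq⟩
  · rw [Complex.norm_real, Real.norm_eq_abs]
    have habs : |ε * q| = q := by
      rcases hε with h | h <;> rw [h]
      · rw [one_mul, abs_of_pos hq]
      · rw [neg_one_mul, abs_neg, abs_of_pos hq]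
    rw [habs]; exact ⟨hpq, le_refl q⟩
  · rw [Complex.norm_real, Real.norm_eq_abs, abs_of_pos hp]; exact ⟨le_refl p, hpq⟩

lemma D2_lower' (d δ : ℕ) (p q : ℝ) (hde : d % 2 = 0) (hδ : 4 * δ ≤ d) (hd : 0 < d)
    (hq : 0 < q) (θ₁ θ₂ : ℝ) :
    q * Real.sqrt d ≤ D2 (fun n : Fin d => Complex.exp ((θ₁:ℂ) * Complex.I) * xpm d δ p q 1 n)
      (fun n : Fin d => Complex.exp ((θ₂:ℂ) * Complex.I) * xpm d δ p q (-1) n) := by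
  unfold D2
  apply le_ciInf
  intro θ
  set c : ℂ := Complex.exp (((θ + θ₂ - θ₁ : ℝ) : ℂ) * Complex.I) with hc
  have hcabs : ‖c‖ = 1 := Complex.norm_exp_ofReal_mul_I _
  have hpt : ∀ n : Fin d,
      ‖Complex.exp ((θ₁:ℂ) * Complex.I) * xpm d δ p q 1 n -
        Complex.exp ((θ:ℝ) * Complex.I) * (Complex.exp ((θ₂:ℂ) * Complex.I) * xpm d δ p q (-1) n)‖
      = ‖xpm d δ p q 1 n - c * xpm d δ p q (-1) n‖ := by
    intro n
    have hmul : Complex.exp ((θ₁:ℂ) * Complex.I) * c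
        = Complex.exp ((θ:ℝ) * Complex.I) * Complex.exp ((θ₂:ℂ) * Complex.I) := by
      rw [hc, ← Complex.exp_add, ← Complex.exp_add]
      congr 1
      push_cast; ring
    calc ‖Complex.exp ((θ₁:ℂ) * Complex.I) * xpm d δ p q 1 n -
        Complex.exp ((θ:ℝ) * Complex.I) * (Complex.exp ((θ₂:ℂ) * Complex.I) * xpm d δ p q (-1) n)‖
        = ‖Complex.exp ((θ₁:ℂ) * Complex.I) * (xpm d δ p q 1 n - c * xpm d δ p q (-1) n)‖ := by
          congr 1; linear_combination (xpm d δ p q (-1) n) * hmul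
      _ = ‖Complex.exp ((θ₁:ℂ) * Complex.I)‖ * ‖xpm d δ p q 1 n - c * xpm d δ p q (-1) n‖ := by
          rw [norm_mul]
      _ = ‖xpm d δ p q 1 n - c * xpm d δ p q (-1) n‖ := by
          rw [Complex.norm_exp_ofReal_mul_I]; ring
  unfold norm2
  have hsum : ∑ n : Fin d, ‖Complex.exp ((θ₁:ℂ) * Complex.I) * xpm d δ p q 1 n -
        Complex.exp ((θ:ℝ) * Complex.I) * (Complex.exp ((θ₂:ℂ) * Complex.I) * xpm d δ p q (-1) n)‖ ^ 2
      = ∑ i ∈ Finset.range d,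
        ‖((wv d δ p q 1 i : ℝ) : ℂ) - c * ((wv d δ p q (-1) i : ℝ) : ℂ)‖ ^ 2 := by
    rw [← Fin.sum_univ_eq_sum_range (fun i =>
      ‖((wv d δ p q 1 i : ℝ) : ℂ) - c * ((wv d δ p q (-1) i : ℝ) : ℂ)‖ ^ 2) d]
    refine Finset.sum_congr rfl (fun n _ => ?_)
    rw [hpt n, xpm_eq_wv, xpm_eq_wv]
  rw [hsum]
  set G : ℕ → ℝ := fun i =>
    ‖((wv d δ p q 1 i : ℝ) : ℂ) - c * ((wv d δ p q (-1) i : ℝ) : ℂ)‖ ^ 2 with hG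
  have hGnn : ∀ i, 0 ≤ G i := fun i => by positivity
  have hsub : Finset.range (d / 2 - δ) ∪ Finset.Ico (d / 2) (d - δ) ⊆ Finset.range d := by
    intro i hi
    simp only [Finset.mem_union, Finset.mem_range, Finset.mem_Ico] at hi ⊢
    omega
  have hdisj : Disjoint (Finset.range (d / 2 - δ)) (Finset.Ico (d / 2) (d - δ)) := by
    rw [Finset.disjoint_left]
    intro i hi hi'
    simp only [Finset.mem_range, Finset.mem_Ico] at hi hi'
    omega
  have hge : ∑ i ∈ Finset.range d, G i ≥
      ∑ i ∈ Finset.range (d / 2 - δ) ∪ Finset.Ico (d / 2) (d - δ), G i :=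
    Finset.sum_le_sum_of_subset_of_nonneg hsub (fun i _ _ => hGnn i)
  rw [Finset.sum_union hdisj] at hge
  have h1 : ∑ i ∈ Finset.range (d / 2 - δ), G i
      = (d / 2 - δ : ℕ) * (q ^ 2 * ‖1 - c‖ ^ 2) := by
    have hterm : ∀ i ∈ Finset.range (d / 2 - δ), G i = q ^ 2 * ‖1 - c‖ ^ 2 := by
      intro i hi
      simp only [Finset.mem_range] at hi
      have hw1 : wv d δ p q 1 i = q := by unfold wv; rw [if_pos hi]
      have hw2 : wv d δ p q (-1) i = q := by unfold wv; rw [if_pos hi]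
      simp only [hG, hw1, hw2]
      have : ((q:ℝ):ℂ) - c * ((q:ℝ):ℂ) = (1 - c) * ((q:ℝ):ℂ) := by ring
      rw [this, norm_mul, mul_pow, Complex.norm_real, Real.norm_eq_abs, abs_of_pos hq]
      ring
    rw [Finset.sum_congr rfl hterm, Finset.sum_const, Finset.card_range, nsmul_eq_mul]
  have h2 : ∑ i ∈ Finset.Ico (d / 2) (d - δ), G i
      = ((d - δ) - d / 2 : ℕ) * (q ^ 2 * ‖1 + c‖ ^ 2) := by
    have hterm : ∀ i ∈ Finset.Ico (d / 2) (d - δ), G i = q ^ 2 * ‖1 + c‖ ^ 2 := by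
      intro i hi
      simp only [Finset.mem_Ico] at hi
      have hw1 : wv d δ p q 1 i = q := by
        unfold wv; rw [if_neg (by omega), if_neg (by omega), if_pos (by omega)]; ring
      have hw2 : wv d δ p q (-1) i = -q := by
        unfold wv; rw [if_neg (by omega), if_neg (by omega), if_pos (by omega)]; ring
      simp only [hG, hw1, hw2]
      have : ((q:ℝ):ℂ) - c * ((-q:ℝ):ℂ) = (1 + c) * ((q:ℝ):ℂ) := by push_cast; ring
      rw [this, norm_mul, mul_pow, Complex.norm_real, Real.norm_eq_abs, abs_of_pos hq]
      ring
    rw [Finset.sum_congr rfl hterm, Finset.sum_const, Nat.card_Ico, nsmul_eq_mul]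
  have hcard1 : ((d - δ) - d / 2 : ℕ) = (d / 2 - δ : ℕ) := by omega
  have hkey : (d : ℝ) * q ^ 2 ≤ ∑ i ∈ Finset.range d, G i := by
    have h4 := abs_one_add_sq' c hcabs
    have hcards : (4 : ℝ) * (d / 2 - δ : ℕ) ≥ (d : ℝ) := by
      have : 4 * (d / 2 - δ) ≥ d := by omega
      exact_mod_cast this
    have expand : ((d / 2 - δ : ℕ) : ℝ) * (q ^ 2 * ‖1 - c‖ ^ 2)
        + ((d / 2 - δ : ℕ) : ℝ) * (q ^ 2 * ‖1 + c‖ ^ 2)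
        = ((d / 2 - δ : ℕ) : ℝ) * 4 * q ^ 2 := by
      have h5 : ‖1 - c‖ ^ 2 = 4 - ‖1 + c‖ ^ 2 := by linarith
      rw [h5]; ring
    rw [h1, h2, hcard1] at hge
    rw [expand] at hge
    nlinarith [sq_nonneg q]
  have hq2 : q * Real.sqrt d = Real.sqrt ((d:ℝ) * q ^ 2) := by
    rw [Real.sqrt_mul (by positivity), Real.sqrt_sq hq.le]; ring
  rw [hq2]
  exact Real.sqrt_le_sqrt hkey

lemma entry_bound' (d δ t : ℕ) {K : ℕ} (m : Fin K → Fin d → ℂ) (k : Fin K) (M p q : ℝ)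
    (hd : 0 < d) (hde : d % 2 = 0) (hδd : 4 * δ ≤ d)
    (hsupp : ∀ n, m k n ≠ 0 → (n : ℕ) < δ) (hM : ∀ n, ‖m k n‖ ≤ M)
    (hp : 0 < p) (hpq : p ≤ q) (ht : 0 < t) (htd : t ≤ d) :
    (‖innerC (shift (t:ℤ) (m k)) (xpm d δ p q 1)‖ -
      ‖innerC (shift (t:ℤ) (m k)) (xpm d δ p q (-1))‖) ^ 2 ≤
    (if (d/2 - δ < d - t ∧ d - t < d/2) ∨ (d - 2*δ < d - t ∧ d - t < d - δ)
      then (2 * p * (δ:ℝ) * M) ^ 2 else 0) := by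
  classical
  set b := d - t with hbdef
  set c : Fin d → ℂ := fun n => shift (t:ℤ) (m k) n with hcdef
  have hM0 : 0 ≤ M := le_trans (norm_nonneg _) (hM ⟨0, hd⟩)
  have hckey : ∀ n : Fin d, c n ≠ 0 → ∃ r, r < δ ∧ (n : ℕ) = (r + b) % d := by
    intro n hn
    have hval : ((intToFin d (Fin.pos n) ((n:ℤ) + (t:ℕ))) : ℕ) = ((n:ℕ) + t) % d :=
      intToFin_val' d (Fin.pos n) (n:ℕ) t
    have hne : m k (intToFin d (Fin.pos n) ((n:ℤ) + (t:ℕ))) ≠ 0 := hn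
    have hlt : ((n:ℕ) + t) % d < δ := hval ▸ hsupp _ hne
    refine ⟨((n:ℕ) + t) % d, hlt, ?_⟩
    have h2 : ((((n:ℕ) + t) % d) + b) % d = (n : ℕ) := by
      rw [Nat.mod_add_mod]
      have h3 : (n:ℕ) + t + b = (n:ℕ) + d := by omega
      rw [h3, Nat.add_mod_right, Nat.mod_eq_of_lt n.isLt]
    exact h2.symm
  have hxpS : ∀ n : Fin d, (d/2 ≤ (n:ℕ) ∧ (n:ℕ) < d - δ) → xpm d δ p q 1 n = (q:ℂ) := by
    intro n hn; unfold xpm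
    rw [if_neg (by omega), if_neg (by omega), if_pos (by omega)]; push_cast; ring
  have hxmS : ∀ n : Fin d, (d/2 ≤ (n:ℕ) ∧ (n:ℕ) < d - δ) → xpm d δ p q (-1) n = -(q:ℂ) := by
    intro n hn; unfold xpm
    rw [if_neg (by omega), if_neg (by omega), if_pos (by omega)]; push_cast; ring
  have hoff : ∀ n : Fin d, ¬(d/2 ≤ (n:ℕ) ∧ (n:ℕ) < d - δ) →
      xpm d δ p q (-1) n = xpm d δ p q 1 n := by
    intro n hn; unfold xpm
    split_ifs with h1 h2 h3
    · rfl
    · rfl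
    · omega
    · rfl
  set Sc : Fin d → Prop := fun n => d/2 ≤ (n:ℕ) ∧ (n:ℕ) < d - δ with hScdef
  set A : ℂ := ∑ n ∈ Finset.univ.filter (fun n => ¬ Sc n), c n * (starRingEnd ℂ) (xpm d δ p q 1 n) with hA
  set B : ℂ := ∑ n ∈ Finset.univ.filter Sc, c n * (q:ℂ) with hB
  have huAB : innerC (shift (t:ℤ) (m k)) (xpm d δ p q 1) = B + A := by
    show (∑ n, c n * (starRingEnd ℂ) (xpm d δ p q 1 n)) = B + A
    rw [← Finset.sum_filter_add_sum_filter_not Finset.univ Sc]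
    congr 1
    refine Finset.sum_congr rfl (fun n hn => ?_)
    have hSn : Sc n := (Finset.mem_filter.mp hn).2
    rw [hxpS n hSn, Complex.conj_ofReal]
  have hvAB : innerC (shift (t:ℤ) (m k)) (xpm d δ p q (-1)) = -B + A := by
    show (∑ n, c n * (starRingEnd ℂ) (xpm d δ p q (-1) n)) = -B + A
    rw [← Finset.sum_filter_add_sum_filter_not Finset.univ Sc]
    congr 1
    · rw [hB, ← Finset.sum_neg_distrib]
      refine Finset.sum_congr rfl (fun n hn => ?_)
      have hSn : Sc n := (Finset.mem_filter.mp hn).2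
      rw [hxmS n hSn]
      rw [show -(q:ℂ) = ((-q : ℝ) : ℂ) by push_cast; ring, Complex.conj_ofReal]
      push_cast; ring
    · refine Finset.sum_congr rfl (fun n hn => ?_)
      have hSn : ¬ Sc n := (Finset.mem_filter.mp hn).2
      rw [hoff n hSn]
  set u := innerC (shift (t:ℤ) (m k)) (xpm d δ p q 1) with hudef
  set v := innerC (shift (t:ℤ) (m k)) (xpm d δ p q (-1)) with hvdef
  by_cases hbad : (∃ n, c n ≠ 0 ∧ Sc n) ∧ (∃ n, c n ≠ 0 ∧ ¬ Sc n)
  · obtain ⟨⟨n₀, hc0, hS0⟩, ⟨n₁, hc1, hS1⟩⟩ := hbad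
    obtain ⟨r₀, hr₀, he₀⟩ := hckey n₀ hc0
    obtain ⟨r₁, hr₁, he₁⟩ := hckey n₁ hc1
    have hblt : b < d := by omega
    have hn0lt := n₀.isLt
    have hn1lt := n₁.isLt
    rw [modsmall' d _ hd (by omega)] at he₀ he₁
    have hS0' : d/2 ≤ (n₀:ℕ) ∧ (n₀:ℕ) < d - δ := hS0
    have hS1' : ¬(d/2 ≤ (n₁:ℕ) ∧ (n₁:ℕ) < d - δ) := hS1
    have hcond : (d/2 - δ < b ∧ b < d/2) ∨ (d - 2*δ < b ∧ b < d - δ) := by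
      split_ifs at he₀ he₁ <;> omega
    rw [hbdef] at hcond
    rw [if_pos hcond]
    have hpreg : ∀ n : Fin d, c n ≠ 0 → ¬ Sc n → xpm d δ p q 1 n = (p:ℂ) := by
      intro n hcn hnS
      obtain ⟨r, hr, he⟩ := hckey n hcn
      rw [modsmall' d _ hd (by omega)] at he
      have hnlt := n.isLt
      have hnS' : ¬(d/2 ≤ (n:ℕ) ∧ (n:ℕ) < d - δ) := hnS
      have hreg : ((d/2 - δ ≤ (n:ℕ) ∧ (n:ℕ) < d/2) ∨ (d - δ ≤ (n:ℕ))) := by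
        split_ifs at he₀ he <;> omega
      unfold xpm
      rcases hreg with h | h
      · rw [if_neg (by omega), if_pos (by omega)]
      · rw [if_neg (by omega), if_neg (by omega), if_neg (by omega)]
    have hAbound : ‖A‖ ≤ (δ:ℝ) * (M * p) := by
      set T := Finset.univ.filter (fun n : Fin d => ¬ Sc n ∧ c n ≠ 0) with hT
      have step1 : ‖A‖ ≤
          ∑ n ∈ Finset.univ.filter (fun n => ¬ Sc n),
            ‖c n‖ * ‖xpm d δ p q 1 n‖ := by
        refine le_trans (norm_sum_le _ _) (le_of_eq ?_)
        refine Finset.sum_congr rfl (fun n _ => ?_)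
        rw [norm_mul, Complex.norm_conj]
      have step2 : ∑ n ∈ Finset.univ.filter (fun n => ¬ Sc n),
            ‖c n‖ * ‖xpm d δ p q 1 n‖
          = ∑ n ∈ T, ‖c n‖ * ‖xpm d δ p q 1 n‖ := by
        refine (Finset.sum_subset ?_ ?_).symm
        · intro n hn
          simp only [hT, Finset.mem_filter, Finset.mem_univ, true_and] at hn ⊢
          exact hn.1
        · intro n hn hn2
          simp only [hT, Finset.mem_filter, Finset.mem_univ, true_and] at hn hn2
          have : c n = 0 := by
            by_contra hcc
            exact hn2 ⟨hn, hcc⟩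
          rw [this]
          simp
      have step3 : ∑ n ∈ T, ‖c n‖ * ‖xpm d δ p q 1 n‖
          ≤ ∑ _n ∈ T, M * p := by
        refine Finset.sum_le_sum (fun n hn => ?_)
        simp only [hT, Finset.mem_filter, Finset.mem_univ, true_and] at hn
        have h1 : ‖c n‖ ≤ M := hM _
        have h2 : ‖xpm d δ p q 1 n‖ = p := by
          rw [hpreg n hn.2 hn.1, Complex.norm_real, Real.norm_eq_abs, abs_of_pos hp]
        rw [h2]
        exact mul_le_mul_of_nonneg_right h1 hp.le
      have hcard : (T.card : ℝ) ≤ (δ : ℝ) := by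
        have hsub : T ⊆ (Finset.range δ).image
            (fun r => (⟨(r + b) % d, Nat.mod_lt _ hd⟩ : Fin d)) := by
          intro n hn
          simp only [hT, Finset.mem_filter, Finset.mem_univ, true_and] at hn
          obtain ⟨r, hr, he⟩ := hckey n hn.2
          simp only [Finset.mem_image, Finset.mem_range]
          exact ⟨r, hr, Fin.ext he.symm⟩
        have := le_trans (Finset.card_le_card hsub) (le_trans Finset.card_image_le
          (le_of_eq (Finset.card_range δ)))
        exact_mod_cast this
      calc ‖A‖ ≤ ∑ _n ∈ T, M * p := le_trans step1 (step2 ▸ step3)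
        _ = (T.card : ℝ) * (M * p) := by rw [Finset.sum_const, nsmul_eq_mul]
        _ ≤ (δ:ℝ) * (M * p) := mul_le_mul_of_nonneg_right hcard (by positivity)
    have h1 : ‖u‖ ≤ ‖B‖ + ‖A‖ := by
      rw [huAB]; exact norm_add_le B A
    have h1' : ‖v‖ ≤ ‖B‖ + ‖A‖ := by
      rw [hvAB]
      refine le_trans (norm_add_le _ _) ?_
      rw [norm_neg]
    have h2 : ‖B‖ - ‖A‖ ≤ ‖v‖ := by
      have hBv : B = A - v := by rw [hvAB]; ring
      have : ‖B‖ ≤ ‖A‖ + ‖v‖ := by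
        rw [hBv, sub_eq_add_neg]
        refine le_trans (norm_add_le _ _) ?_
        rw [norm_neg]
      linarith
    have h2' : ‖B‖ - ‖A‖ ≤ ‖u‖ := by
      have hBu : B = u - A := by rw [huAB]; ring
      have : ‖B‖ ≤ ‖u‖ + ‖A‖ := by
        rw [hBu, sub_eq_add_neg]
        refine le_trans (norm_add_le _ _) ?_
        rw [norm_neg]
      linarith
    have hup : ‖u‖ - ‖v‖ ≤ 2 * p * (δ:ℝ) * M := by nlinarith
    have hdn : -(2 * p * (δ:ℝ) * M) ≤ ‖u‖ - ‖v‖ := by nlinarith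
    exact sq_le_sq' hdn hup
  · have hzero : ‖u‖ = ‖v‖ := by
      rcases not_and_or.mp hbad with h | h
      · push_neg at h
        have hB0 : B = 0 := by
          refine Finset.sum_eq_zero (fun n hn => ?_)
          have hSn : Sc n := (Finset.mem_filter.mp hn).2
          have : c n = 0 := by
            by_contra hcc
            exact (h n hcc) hSn
          rw [this]; ring
        rw [huAB, hvAB, hB0]
        norm_num
      · push_neg at h
        have hA0 : A = 0 := by
          refine Finset.sum_eq_zero (fun n hn => ?_)
          have hSn : ¬ Sc n := (Finset.mem_filter.mp hn).2
          have : c n = 0 := by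
            by_contra hcc
            exact hSn (h n hcc)
          rw [this]; ring
        rw [huAB, hvAB, hA0, add_zero, add_zero, norm_neg]
    rw [hzero, sub_self]
    norm_num
    split_ifs
    · positivity
    · exact le_refl 0

lemma count_lemma' (a L d u v : ℕ) (ha : 0 < a) (hdal : d = a * L) :
    ((Finset.univ.filter (fun ℓ : Fin L =>
      u < d - ((ℓ:ℕ)+1)*a ∧ d - ((ℓ:ℕ)+1)*a < v)).card) * a ≤ v + 2*a - u := by
  classical
  set F := Finset.univ.filter (fun ℓ : Fin L =>
    u < d - ((ℓ:ℕ)+1)*a ∧ d - ((ℓ:ℕ)+1)*a < v) with hF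
  have hbval : ∀ ℓ : Fin L, d - ((ℓ:ℕ)+1)*a = a * (L - ((ℓ:ℕ)+1)) := by
    intro ℓ
    rw [hdal, Nat.mul_sub, mul_comm a ((ℓ:ℕ)+1)]
  have hmap : ∀ ℓ ∈ F, L - ((ℓ:ℕ)+1) ∈ Finset.Icc (u/a) (v/a) := by
    intro ℓ hℓ
    simp only [hF, Finset.mem_filter, Finset.mem_univ, true_and] at hℓ
    obtain ⟨h1, h2⟩ := hℓ
    rw [hbval ℓ] at h1 h2
    set i := L - ((ℓ:ℕ)+1) with hi
    rw [Finset.mem_Icc]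
    constructor
    · have := Nat.div_le_div_right (c := a) h1.le
      rwa [Nat.mul_div_cancel_left i ha] at this
    · have := Nat.div_le_div_right (c := a) h2.le
      rwa [Nat.mul_div_cancel_left i ha] at this
  have hinj : Set.InjOn (fun ℓ : Fin L => L - ((ℓ:ℕ)+1)) F := by
    intro x hx y hy hxy
    simp only at hxy
    have hx' := x.isLt
    have hy' := y.isLt
    exact Fin.ext (by omega)
  have hcard : F.card ≤ v/a + 1 - u/a := by
    have := Finset.card_le_card_of_injOn _ hmap hinj
    rwa [Nat.card_Icc] at this
  have hX : F.card * a ≤ (v/a + 1 - u/a) * a := Nat.mul_le_mul_right a hcard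
  have he : (v/a + 1 - u/a) * a = (v/a + 1) * a - (u/a) * a := by rw [Nat.sub_mul]
  have he2 : (v/a + 1) * a = (v/a) * a + a := by rw [add_mul, one_mul]
  have hP : (v/a) * a ≤ v := Nat.div_mul_le_self v a
  have hQ : u < (u/a) * a + a := by
    have h := Nat.div_add_mod u a
    have h2 := Nat.mod_lt u ha
    have h3 : a * (u/a) = (u/a) * a := mul_comm _ _
    omega
  have hX2 : F.card * a ≤ (v/a) * a + a - (u/a) * a := by
    rw [he, he2] at hX; exact hX
  generalize hgen1 : (v/a) * a = P at hX2 hP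
  generalize hgen2 : (u/a) * a = Q at hX2 hQ
  generalize hgen3 : F.card * a = X at hX2 ⊢
  omega

lemma Zdiff_bound' (d δ a L K : ℕ) (m : Fin K → Fin d → ℂ) (p q M : ℝ)
    (hd : 0 < d) (hde : d % 2 = 0) (hδd : 4 * δ ≤ d) (ha : 0 < a) (hL : 0 < L)
    (hdal : d = a * L) (haδ : a < δ) (hK : 0 < K)
    (hsupp : ∀ k n, m k n ≠ 0 → (n : ℕ) < δ) (hM : ∀ k n, ‖m k n‖ ≤ M)
    (hp : 0 < p) (hpq : p ≤ q) :
    ‖Zmap L m a (xpm d δ p q 1) - Zmap L m a (xpm d δ p q (-1))‖ ^ 2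
      ≤ 24 * K * p^2 * (δ:ℝ)^3 * M^2 / a := by
  classical
  have hM0 : 0 ≤ M := le_trans (norm_nonneg _) (hM ⟨0, hK⟩ ⟨0, hd⟩)
  rw [EuclideanSpace.norm_eq, Real.sq_sqrt (Finset.sum_nonneg (fun _ _ => by positivity))]
  set E := (2 * p * (δ:ℝ) * M) ^ 2 with hE
  have hEnn : 0 ≤ E := by positivity
  set cond : Fin L → Prop := fun ℓ =>
    (d/2 - δ < d - ((ℓ:ℕ)+1)*a ∧ d - ((ℓ:ℕ)+1)*a < d/2) ∨
    (d - 2*δ < d - ((ℓ:ℕ)+1)*a ∧ d - ((ℓ:ℕ)+1)*a < d - δ) with hcond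
  set ΔZ := Zmap L m a (xpm d δ p q 1) - Zmap L m a (xpm d δ p q (-1)) with hΔZ
  have hterm : ∀ (k : Fin K) (ℓ : Fin L),
      ‖ΔZ (k, ℓ)‖ ^ 2 ≤ if cond ℓ then E else 0 := by
    intro k ℓ
    have hsub : ΔZ (k, ℓ) = Zmap L m a (xpm d δ p q 1) (k, ℓ)
        - Zmap L m a (xpm d δ p q (-1)) (k, ℓ) := rfl
    rw [hsub, Real.norm_eq_abs, sq_abs]
    have ht : 0 < ((ℓ:ℕ)+1)*a := Nat.mul_pos (Nat.succ_pos _) ha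
    have htd : ((ℓ:ℕ)+1)*a ≤ d := by
      rw [hdal, mul_comm a L]
      exact Nat.mul_le_mul_right a (by omega)
    have hb := entry_bound' d δ (((ℓ:ℕ)+1)*a) m k M p q hd hde hδd (hsupp k) (hM k)
      hp hpq ht htd
    exact hb
  have hrow : ∀ k : Fin K, ∑ ℓ : Fin L, ‖ΔZ (k, ℓ)‖ ^ 2 ≤ (6*(δ:ℝ)/a) * E := by
    intro k
    have s1 : ∑ ℓ : Fin L, ‖ΔZ (k, ℓ)‖ ^ 2 ≤ ∑ ℓ : Fin L, (if cond ℓ then E else 0) :=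
      Finset.sum_le_sum (fun ℓ _ => hterm k ℓ)
    have s2 : ∑ ℓ : Fin L, (if cond ℓ then E else 0)
        = ((Finset.univ.filter cond).card : ℝ) * E := by
      rw [Finset.sum_ite, Finset.sum_const, Finset.sum_const_zero, add_zero, nsmul_eq_mul]
    have hcardnat : (Finset.univ.filter cond).card * a ≤ 6 * δ := by
      have hsplit : Finset.univ.filter cond ⊆
          Finset.univ.filter (fun ℓ : Fin L =>
            d/2 - δ < d - ((ℓ:ℕ)+1)*a ∧ d - ((ℓ:ℕ)+1)*a < d/2) ∪
          Finset.univ.filter (fun ℓ : Fin L =>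
            d - 2*δ < d - ((ℓ:ℕ)+1)*a ∧ d - ((ℓ:ℕ)+1)*a < d - δ) := by
        rw [← Finset.filter_or]
      have h1 := count_lemma' a L d (d/2 - δ) (d/2) ha hdal
      have h2 := count_lemma' a L d (d - 2*δ) (d - δ) ha hdal
      have hc := le_trans (Finset.card_le_card hsplit) (Finset.card_union_le _ _)
      have hmul := Nat.mul_le_mul_right a hc
      rw [add_mul] at hmul
      have hr1 : d/2 + 2*a - (d/2 - δ) ≤ δ + 2*a := by omega
      have hr2 : (d - δ) + 2*a - (d - 2*δ) ≤ δ + 2*a := by omega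
      have g1 : (Finset.univ.filter (fun ℓ : Fin L =>
            d/2 - δ < d - ((ℓ:ℕ)+1)*a ∧ d - ((ℓ:ℕ)+1)*a < d/2)).card * a ≤ δ + 2*a :=
        le_trans h1 hr1
      have g2 : (Finset.univ.filter (fun ℓ : Fin L =>
            d - 2*δ < d - ((ℓ:ℕ)+1)*a ∧ d - ((ℓ:ℕ)+1)*a < d - δ)).card * a ≤ δ + 2*a :=
        le_trans h2 hr2
      have : (Finset.univ.filter cond).card * a ≤ (δ + 2*a) + (δ + 2*a) := by
        refine le_trans hmul ?_
        exact add_le_add g1 g2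
      omega
    have hcard : ((Finset.univ.filter cond).card : ℝ) ≤ 6*(δ:ℝ)/a := by
      rw [le_div_iff₀ (by exact_mod_cast ha)]
      exact_mod_cast hcardnat
    calc ∑ ℓ : Fin L, ‖ΔZ (k, ℓ)‖ ^ 2 ≤ ((Finset.univ.filter cond).card : ℝ) * E := by
          rw [← s2]; exact s1
      _ ≤ (6*(δ:ℝ)/a) * E := mul_le_mul_of_nonneg_right hcard hEnn
  have main : ∑ kl : Fin K × Fin L, ‖ΔZ kl‖ ^ 2 ≤ (K:ℝ) * ((6*(δ:ℝ)/a) * E) := by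
    rw [Fintype.sum_prod_type]
    calc ∑ k : Fin K, ∑ ℓ : Fin L, ‖ΔZ (k, ℓ)‖ ^ 2
        ≤ ∑ _k : Fin K, (6*(δ:ℝ)/a) * E := Finset.sum_le_sum (fun k _ => hrow k)
      _ = (K:ℝ) * ((6*(δ:ℝ)/a) * E) := by
          rw [Finset.sum_const, Finset.card_univ, Fintype.card_fin, nsmul_eq_mul]
  refine le_trans main (le_of_eq ?_)
  rw [hE]
  have haa : (a:ℝ) ≠ 0 := by positivity
  field_simp
  ring

/-- Lower Lipschitz bound for recovery from the `Z`-measurements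
with arbitrary locally supported masks. -/
theorem lower_lipschitz_Z : ∃ C : ℝ, 0 < C ∧
    ∀ (d δ a L K : ℕ) (m : Fin K → Fin d → ℂ) (p q CB : ℝ)
      (B : EuclideanSpace ℝ (Fin K × Fin L) → (Fin d → ℂ)),
      0 < d → Even d → 4 * δ ≤ d → 0 < a → 0 < L → d = a * L → 1 ≤ a → a < δ →
      (∀ k n, m k n ≠ 0 → (n : ℕ) < δ) →
      0 < maskSup m →
      0 < p → p ≤ q →
      (∀ y y', D2 (B y) (B y') ≤ CB * ‖y - y'‖) →
      (∀ x ∈ Cpq d p q, phaseEquiv (B (Zmap L m a x)) x) →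
      C * q * Real.sqrt ((d : ℝ) * a) /
          (p * Real.sqrt K * maskSup m * (δ : ℝ) ^ ((3 : ℝ) / 2)) ≤ CB := by
  refine ⟨1/5, by norm_num, ?_⟩
  intro d δ a L K m p q CB B hd hdeven hδd ha hL hdal h1a haδ hsupp hMpos hp hpq hlip hrec
  have hq : 0 < q := lt_of_lt_of_le hp hpq
  have hde : d % 2 = 0 := Nat.even_iff.mp hdeven
  have hK : 0 < K := by
    rcases Nat.eq_zero_or_pos K with h0 | h
    · exfalso
      subst h0
      have : maskSup m = 0 := by
        unfold maskSup
        exact Real.iSup_of_isEmpty _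
      rw [this] at hMpos
      exact lt_irrefl 0 hMpos
    · exact h
  set M := maskSup m with hMdef
  have hM : ∀ k n, ‖m k n‖ ≤ M := by
    intro k n
    have h1 : ‖m k n‖ ≤ ⨆ n, ‖m k n‖ :=
      le_ciSup (f := fun n => ‖m k n‖) (Finite.bddAbove_range _) n
    have h2 : (⨆ n, ‖m k n‖) ≤ M :=
      le_ciSup (f := fun k => ⨆ n, ‖m k n‖) (Finite.bddAbove_range _) k
    exact le_trans h1 h2
  obtain ⟨θ₁, hθ₁⟩ := hrec (xpm d δ p q 1) (xpm_mem_Cpq d δ p q hp hpq 1 (Or.inl rfl))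
  obtain ⟨θ₂, hθ₂⟩ := hrec (xpm d δ p q (-1)) (xpm_mem_Cpq d δ p q hp hpq (-1) (Or.inr rfl))
  have hD : q * Real.sqrt d ≤
      D2 (B (Zmap L m a (xpm d δ p q 1))) (B (Zmap L m a (xpm d δ p q (-1)))) := by
    rw [hθ₁, hθ₂]
    exact D2_lower' d δ p q hde hδd hd hq θ₁ θ₂
  set N := ‖Zmap L m a (xpm d δ p q 1) - Zmap L m a (xpm d δ p q (-1))‖ with hNdef
  have hkey : q * Real.sqrt d ≤ CB * N :=
    le_trans hD (hlip _ _)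
  have hN2 := Zdiff_bound' d δ a L K m p q M hd hde hδd ha hL hdal haδ hK hsupp hM hp hpq
  set D32 := (δ:ℝ) ^ ((3:ℝ)/2) with hD32
  have hδpos : 0 < δ := by omega
  have hD32pos : 0 < D32 := Real.rpow_pos_of_pos (by exact_mod_cast hδpos) _
  have hD32sq : D32 ^ 2 = (δ:ℝ) ^ 3 := by
    rw [hD32, ← Real.rpow_natCast ((δ:ℝ) ^ ((3:ℝ)/2)) 2, ← Real.rpow_mul (Nat.cast_nonneg δ)]
    rw [show ((3:ℝ)/2 * ((2:ℕ):ℝ)) = ((3:ℕ):ℝ) by norm_num, Real.rpow_natCast]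
  set R := 5 * p * D32 * M * Real.sqrt K / Real.sqrt a with hRdef
  have hsqrtKpos : 0 < Real.sqrt K := Real.sqrt_pos.mpr (by exact_mod_cast hK)
  have hsqrtapos : 0 < Real.sqrt a := Real.sqrt_pos.mpr (by exact_mod_cast ha)
  have hR0 : 0 ≤ R := by positivity
  have hR2 : R ^ 2 = 25 * p^2 * (δ:ℝ)^3 * M^2 * K / a := by
    rw [hRdef, div_pow, mul_pow, mul_pow, mul_pow, hD32sq,
      Real.sq_sqrt (Nat.cast_nonneg K), Real.sq_sqrt (Nat.cast_nonneg a)]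
    ring
  have hM0 : 0 ≤ M := le_of_lt hMpos
  have hNR : N ≤ R := by
    have hN0 : 0 ≤ N := norm_nonneg _
    refine (pow_le_pow_iff_left₀ hN0 hR0 (two_ne_zero)).mp ?_
    rw [hR2]
    refine le_trans hN2 ?_
    have hprod : 0 ≤ (K:ℝ) * p^2 * (δ:ℝ)^3 * M^2 / a := by positivity
    have e1 : 24 * (K:ℝ) * p^2 * (δ:ℝ)^3 * M^2 / a
        = 24 * ((K:ℝ) * p^2 * (δ:ℝ)^3 * M^2 / a) := by ring
    have e2 : 25 * p^2 * (δ:ℝ)^3 * M^2 * (K:ℝ) / a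
        = 25 * ((K:ℝ) * p^2 * (δ:ℝ)^3 * M^2 / a) := by ring
    rw [e1, e2]
    linarith
  have hCB0 : 0 ≤ CB := by
    by_contra hneg
    push_neg at hneg
    have hqd : 0 < q * Real.sqrt d := by
      have : 0 < Real.sqrt d := Real.sqrt_pos.mpr (by exact_mod_cast hd)
      positivity
    have : CB * N ≤ 0 := mul_nonpos_of_nonpos_of_nonneg hneg.le (norm_nonneg _)
    linarith
  have hchain : q * Real.sqrt d ≤ CB * R :=
    le_trans hkey (mul_le_mul_of_nonneg_left hNR hCB0)
  have hRa : R * Real.sqrt a = 5 * p * D32 * M * Real.sqrt K := by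
    rw [hRdef]
    field_simp
  have hstep : q * Real.sqrt d * Real.sqrt a ≤ CB * (5 * p * D32 * M * Real.sqrt K) := by
    have h := mul_le_mul_of_nonneg_right hchain (Real.sqrt_nonneg a)
    calc q * Real.sqrt d * Real.sqrt a ≤ CB * R * Real.sqrt a := h
      _ = CB * (5 * p * D32 * M * Real.sqrt K) := by rw [mul_assoc, hRa]
  rw [Real.sqrt_mul (Nat.cast_nonneg d)]
  rw [div_le_iff₀ (by positivity)]
  calc 1/5 * q * (Real.sqrt d * Real.sqrt a)
      = (q * Real.sqrt d * Real.sqrt a) / 5 := by ring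
    _ ≤ (CB * (5 * p * D32 * M * Real.sqrt K)) / 5 := by linarith
    _ = CB * (p * Real.sqrt K * M * D32) := by ring
end
end

section
/- There is a universal constant C > 0 with the following property. Let d be an even positive integer, let δ ≤ d/4, let a and L be positive integers with d = aL and 1 ≤ a < δ, let m_1,…,m_{2δ−1} be the two-shot masks, and let 0 < p ≤ q. Suppose B : ℝ^{(2δ−1)×L} → ℂ^d satisfies D₂(B(y), B(y′)) ≤ C_B‖y − y′‖₂ for all y, y′ and B(Z(x)) ∼ x for every x ∈ C_{p,q}. Then C_B ≥ C·q·√(d·a) / (p·δ). -/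
open scoped BigOperators

noncomputable section

/-- The two-shot masks: `m_1 = e_1`, `m_{2j} = e_1 + e_{j+1}`, `m_{2j+1} = e_1 + i e_{j+1}`
for `1 ≤ j ≤ δ - 1` (the index `k : Fin (2δ-1)` stands for the mask `m_{k+1}`). -/
def twoShotMask (d δ : ℕ) : Fin (2 * δ - 1) → Fin d → ℂ :=
  fun k n =>
    if (k : ℕ) = 0 then (if (n : ℕ) = 0 then 1 else 0)
    else if (k : ℕ) % 2 = 1 then
      (if (n : ℕ) = 0 then 1 else if (n : ℕ) = ((k : ℕ) + 1) / 2 then 1 else 0)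
    else (if (n : ℕ) = 0 then 1 else if (n : ℕ) = (k : ℕ) / 2 then Complex.I else 0)


lemma intToFin_eq_iff (d : ℕ) (hd : 0 < d) (w : ℤ) (y : Fin d) :
    intToFin d hd w = y ↔ (w - (y : ℤ)) % d = 0 := by
  have hy : (y : ℤ) % d = y :=
    Int.emod_eq_of_lt (by positivity) (by exact_mod_cast y.isLt)
  have h1 : 0 ≤ w % (d : ℤ) := Int.emod_nonneg w (by exact_mod_cast hd.ne')
  have h2 : w % (d : ℤ) < (d : ℤ) := Int.emod_lt_of_pos w (by exact_mod_cast hd)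
  rw [Fin.ext_iff]
  have hv : (intToFin d hd w : ℕ) = (w % d).toNat := rfl
  rw [hv]
  constructor
  · intro h
    have hw : w % d = (y : ℤ) := by omega
    rw [← Int.emod_eq_emod_iff_emod_sub_eq_zero, hw, hy]
  · intro h
    have := (Int.emod_eq_emod_iff_emod_sub_eq_zero).mpr h
    rw [hy] at this
    omega

lemma intToFin_coe_int (d : ℕ) (hd : 0 < d) (w : ℤ) :
    ((intToFin d hd w : Fin d) : ℤ) = w % d := by
  have h1 : 0 ≤ w % (d : ℤ) := Int.emod_nonneg w (by exact_mod_cast hd.ne')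
  have hv : (intToFin d hd w : ℕ) = (w % d).toNat := rfl
  omega

lemma intToFin_add_sub (d : ℕ) (hd : 0 < d) (t : ℤ) (j : Fin d) :
    intToFin d hd ((intToFin d hd ((j : ℤ) - t) : ℤ) + t) = j := by
  rw [intToFin_eq_iff, intToFin_coe_int]
  have h3 : (((j:ℤ) - t) % d - ((j:ℤ) - t)) % d = 0 := by
    simp [Int.sub_emod]
  calc (((j:ℤ) - t) % ↑d + t - (j:ℤ)) % ↑d
      = (((j:ℤ) - t) % d - ((j:ℤ) - t)) % d := by ring_nf
    _ = 0 := h3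

/-- Reindexing a shifted inner product. -/
lemma innerC_shift_eq (d : ℕ) (hd : 0 < d) (t : ℤ) (m x : Fin d → ℂ) :
    innerC (shift t m) x
      = ∑ j : Fin d, m j * (starRingEnd ℂ) (x (intToFin d hd ((j : ℤ) - t))) := by
  let e : Fin d ≃ Fin d :=
    { toFun := fun j => intToFin d hd ((j : ℤ) - t)
      invFun := fun i => intToFin d hd ((i : ℤ) + t)
      left_inv := fun j => intToFin_add_sub d hd t j
      right_inv := by
        intro i
        have h := intToFin_add_sub d hd (-t) i
        rw [sub_neg_eq_add] at h
        rw [← sub_eq_add_neg] at h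
        exact h }
  have key := Equiv.sum_comp e (fun i => m (intToFin d hd ((i : ℤ) + t)) * (starRingEnd ℂ) (x i))
  have hic : innerC (shift t m) x
      = ∑ i : Fin d, m (intToFin d hd ((i : ℤ) + t)) * (starRingEnd ℂ) (x i) := by
    unfold innerC shift
    rfl
  rw [hic, ← key]
  apply Finset.sum_congr rfl
  intro j _
  have he : (e j : Fin d) = intToFin d hd ((j : ℤ) - t) := rfl
  rw [he, intToFin_add_sub d hd t j]
def maskIdx (δ : ℕ) (k : Fin (2*δ-1)) : ℕ :=
  if (k:ℕ) % 2 = 1 then ((k:ℕ)+1)/2 else (k:ℕ)/2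

def maskCoef (δ : ℕ) (k : Fin (2*δ-1)) : ℂ :=
  if (k:ℕ) % 2 = 1 then 1 else Complex.I

lemma maskIdx_bounds (δ : ℕ) (k : Fin (2*δ-1)) (hk : (k:ℕ) ≠ 0) :
    1 ≤ maskIdx δ k ∧ maskIdx δ k ≤ δ - 1 := by
  have hlt := k.isLt
  unfold maskIdx
  split <;> omega

lemma sum_two_spots (d : ℕ) (hd : 0 < d) (c : ℕ) (hc0 : 0 < c) (hcd : c < d)
    (μ : ℂ) (g : Fin d → ℂ) :
    ∑ j : Fin d, (if (j:ℕ) = 0 then 1 else if (j:ℕ) = c then μ else 0) * g j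
      = g ⟨0, hd⟩ + μ * g ⟨c, hcd⟩ := by
  have h := Finset.sum_eq_add (s := (Finset.univ : Finset (Fin d)))
    (f := fun j : Fin d => (if (j:ℕ) = 0 then 1 else if (j:ℕ) = c then μ else 0) * g j)
    (⟨0, hd⟩ : Fin d) (⟨c, hcd⟩ : Fin d)
    (by intro hcon; rw [Fin.ext_iff] at hcon; simp at hcon; omega)
    (by intro k _ hk
        have hv0 : (k:ℕ) ≠ 0 := by
          intro h; exact hk.1 (Fin.ext h)
        have hvc : (k:ℕ) ≠ c := by
          intro h; exact hk.2 (Fin.ext h)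
        simp [hv0, hvc])
    (by intro h; exact absurd (Finset.mem_univ _) h)
    (by intro h; exact absurd (Finset.mem_univ _) h)
  rw [h]
  simp [hc0.ne']

lemma innerC_shift_mask0 (d δ : ℕ) (hd : 0 < d) (t : ℤ) (x : Fin d → ℂ)
    (k : Fin (2*δ-1)) (hk : (k:ℕ) = 0) :
    innerC (shift t (twoShotMask d δ k)) x
      = (starRingEnd ℂ) (x (intToFin d hd (0 - t))) := by
  rw [innerC_shift_eq d hd]
  have hm : twoShotMask d δ k = fun n : Fin d => if (n:ℕ) = 0 then (1:ℂ) else 0 := by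
    funext n; simp [twoShotMask, hk]
  rw [hm]
  rw [Finset.sum_eq_single (⟨0, hd⟩ : Fin d)]
  · norm_num
  · intro b _ hb
    have : (b:ℕ) ≠ 0 := by intro h; exact hb (Fin.ext h)
    simp [this]
  · intro h; exact absurd (Finset.mem_univ _) h

lemma innerC_shift_maskk (d δ : ℕ) (hd : 0 < d) (t : ℤ) (x : Fin d → ℂ)
    (k : Fin (2*δ-1)) (hk : (k:ℕ) ≠ 0) (hcd : maskIdx δ k < d) :
    innerC (shift t (twoShotMask d δ k)) x
      = (starRingEnd ℂ) (x (intToFin d hd (0 - t)))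
        + maskCoef δ k * (starRingEnd ℂ) (x (intToFin d hd ((maskIdx δ k : ℤ) - t))) := by
  rw [innerC_shift_eq d hd]
  have hm : twoShotMask d δ k
      = fun n : Fin d => if (n:ℕ) = 0 then 1 else if (n:ℕ) = maskIdx δ k then maskCoef δ k else 0 := by
    funext n
    by_cases hpar : (k:ℕ) % 2 = 1 <;> simp [twoShotMask, maskIdx, maskCoef, hk, hpar]
  rw [hm]
  rw [sum_two_spots d hd (maskIdx δ k) (maskIdx_bounds δ k hk).1 hcd]
  norm_num

def wfun (d δ : ℕ) (p q : ℝ) (n : ℕ) : ℝ :=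
  if (d/2 - δ ≤ n ∧ n < d/2) ∨ d - δ ≤ n then p else q

def sgfun (d δ : ℕ) (n : ℕ) : ℝ :=
  if d/2 ≤ n ∧ n < d - δ then -1 else 1

def xP (d δ : ℕ) (p q : ℝ) : Fin d → ℂ := fun i => ((wfun d δ p q i : ℝ) : ℂ)
def xM (d δ : ℕ) (p q : ℝ) : Fin d → ℂ :=
  fun i => ((sgfun d δ i * wfun d δ p q i : ℝ) : ℂ)

lemma wfun_mem (d δ : ℕ) (p q : ℝ) (hp : 0 < p) (hpq : p ≤ q) (n : ℕ) :
    p ≤ wfun d δ p q n ∧ wfun d δ p q n ≤ q := by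
  unfold wfun; split <;> constructor <;> linarith

lemma sgfun_cases (d δ : ℕ) (n : ℕ) : sgfun d δ n = 1 ∨ sgfun d δ n = -1 := by
  unfold sgfun; split <;> simp

lemma abs_xP (d δ : ℕ) (p q : ℝ) (hp : 0 < p) (hpq : p ≤ q) (i : Fin d) :
    ‖xP d δ p q i‖ = wfun d δ p q i := by
  rw [xP, Complex.norm_real, Real.norm_eq_abs, abs_of_pos (lt_of_lt_of_le hp (wfun_mem d δ p q hp hpq i).1)]

lemma abs_xM (d δ : ℕ) (p q : ℝ) (hp : 0 < p) (hpq : p ≤ q) (i : Fin d) :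
    ‖xM d δ p q i‖ = wfun d δ p q i := by
  rw [xM, Complex.norm_real, Real.norm_eq_abs, abs_mul]
  rcases sgfun_cases d δ i with h | h <;>
    rw [h] <;> simp [abs_of_pos (lt_of_lt_of_le hp (wfun_mem d δ p q hp hpq i).1)]

lemma xP_mem_Cpq (d δ : ℕ) (p q : ℝ) (hp : 0 < p) (hpq : p ≤ q) :
    xP d δ p q ∈ Cpq d p q := by
  intro n
  rw [abs_xP d δ p q hp hpq]
  exact wfun_mem d δ p q hp hpq n

lemma xM_mem_Cpq (d δ : ℕ) (p q : ℝ) (hp : 0 < p) (hpq : p ≤ q) :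
    xM d δ p q ∈ Cpq d p q := by
  intro n
  rw [abs_xM d δ p q hp hpq]
  exact wfun_mem d δ p q hp hpq n
lemma abs_abs_sub_le' (s t : ℝ) : |(|s + t| - |s - t|)| ≤ 2 * min |s| |t| := by
  have h1 := abs_abs_sub_abs_le_abs_sub (s+t) (s-t)
  have h2 := abs_abs_sub_abs_le_abs_sub (s+t) (-(s-t))
  rw [abs_neg] at h2
  have e1 : s + t - (s - t) = 2*t := by ring
  have e2 : s + t - -(s - t) = 2*s := by ring
  rw [e1] at h1; rw [e2] at h2
  have h3 : |2*t| = 2*|t| := by rw [abs_mul]; norm_num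
  have h4 : |2*s| = 2*|s| := by rw [abs_mul]; norm_num
  rcases min_cases |s| |t| with ⟨hm,_⟩|⟨hm,_⟩ <;> rw [hm] <;> linarith

lemma abs_abs_sub_le (s t σ τ : ℝ) (hσ : σ = 1 ∨ σ = -1) (hτ : τ = 1 ∨ τ = -1) :
    |(|s + t| - |σ*s + τ*t|)| ≤ 2 * min |s| |t| := by
  have hmin : (0:ℝ) ≤ 2 * min |s| |t| := by
    have := abs_nonneg s; have := abs_nonneg t
    rcases min_cases |s| |t| with ⟨hm,_⟩|⟨hm,_⟩ <;> rw [hm] <;> linarith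
  rcases hσ with h|h <;> rcases hτ with h2|h2 <;> subst h <;> subst h2
  · simpa using hmin
  · have e : (1:ℝ)*s + (-1)*t = s - t := by ring
    rw [e]; exact abs_abs_sub_le' s t
  · have e : (-1:ℝ)*s + 1*t = -(s - t) := by ring
    rw [e, abs_neg]; exact abs_abs_sub_le' s t
  · have e : (-1:ℝ)*s + (-1)*t = -(s + t) := by ring
    rw [e, abs_neg]; simpa using hmin

lemma geom1 (d δ c n0 nc : ℕ) (h2 : 2*(d/2) = d) (h4 : 4*δ ≤ d)
    (hc1 : 1 ≤ c) (hc2 : c ≤ δ - 1) (hn0 : n0 < d)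
    (hnc : nc = n0 + c ∨ (d ≤ n0 + c ∧ nc = n0 + c - d))
    (hmix : ¬((d/2 ≤ n0 ∧ n0 < d - δ) ↔ (d/2 ≤ nc ∧ nc < d - δ))) :
    ((d/2 - δ ≤ n0 ∧ n0 < d/2) ∨ d - δ ≤ n0) ∨ ((d/2 - δ ≤ nc ∧ nc < d/2) ∨ d - δ ≤ nc) := by
  omega

lemma geom2 (d δ c n0 nc : ℕ) (h2 : 2*(d/2) = d) (h4 : 4*δ ≤ d)
    (hc1 : 1 ≤ c) (hc2 : c ≤ δ - 1) (hn0 : n0 < d)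
    (hnc : nc = n0 + c ∨ (d ≤ n0 + c ∧ nc = n0 + c - d))
    (hnb : ¬((d/2 - δ < n0 ∧ n0 < d/2) ∨ (d - 2*δ < n0 ∧ n0 < d - δ))) :
    ((d/2 ≤ n0 ∧ n0 < d - δ) ↔ (d/2 ≤ nc ∧ nc < d - δ)) := by
  omega
lemma Z_entry (d δ a L : ℕ) (p q : ℝ) (hd : 0 < d) (h2 : 2*(d/2) = d) (h4 : 4*δ ≤ d)
    (ha : 1 ≤ a) (haδ : a < δ) (hdal : d = a * L) (hL : 0 < L)
    (hp : 0 < p) (hpq : p ≤ q) (k : Fin (2*δ-1)) (ℓ : Fin L) :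
    |Zmap L (twoShotMask d δ) a (xP d δ p q) (k, ℓ)
      - Zmap L (twoShotMask d δ) a (xM d δ p q) (k, ℓ)| ≤ 2*p
    ∧ (¬((d/2 - δ < (L-1-(ℓ:ℕ))*a ∧ (L-1-(ℓ:ℕ))*a < d/2)
        ∨ (d - 2*δ < (L-1-(ℓ:ℕ))*a ∧ (L-1-(ℓ:ℕ))*a < d - δ)) →
      Zmap L (twoShotMask d δ) a (xP d δ p q) (k, ℓ)
        = Zmap L (twoShotMask d δ) a (xM d δ p q) (k, ℓ)) := by
  have hδ2 : 2 ≤ δ := by omega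
  set t : ℤ := ((((ℓ:ℕ)+1)*a : ℕ) : ℤ) with ht
  have hZ : ∀ x : Fin d → ℂ, Zmap L (twoShotMask d δ) a x (k, ℓ)
      = ‖innerC (shift t (twoShotMask d δ k)) x‖ := fun _ => rfl
  set n0 : ℕ := (L-1-(ℓ:ℕ))*a with hn0def
  have hℓL : (ℓ:ℕ) < L := ℓ.isLt
  -- key arithmetic: ((ℓ+1)*a) + n0 = d
  have hkey : ((ℓ:ℕ)+1)*a + n0 = d := by
    have h1 : ((ℓ:ℕ)+1) + (L-1-(ℓ:ℕ)) = L := by omega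
    have h2' : (((ℓ:ℕ)+1) + (L-1-(ℓ:ℕ))) * a = L * a := by rw [h1]
    rw [add_mul] at h2'
    rw [hn0def, hdal, mul_comm a L]
    exact h2'
  have hn0d : n0 < d := by
    have haℓ : 1 ≤ ((ℓ:ℕ)+1)*a := Nat.one_le_iff_ne_zero.mpr (by positivity)
    omega
  have hfin0 : intToFin d hd (0 - t) = ⟨n0, hn0d⟩ := by
    rw [intToFin_eq_iff]
    have hco : ((⟨n0, hn0d⟩ : Fin d) : ℤ) = (n0 : ℤ) := rfl
    rw [hco]
    have he : (0 - t - (n0 : ℤ)) = -(d : ℤ) := by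
      rw [ht]; push_cast
      have : (((ℓ:ℕ):ℤ)+1)*a + (n0:ℤ) = (d:ℤ) := by exact_mod_cast hkey
      linarith
    rw [he]
    exact Int.emod_eq_zero_of_dvd ⟨-1, by ring⟩
  -- case k = 0
  by_cases hk0 : (k:ℕ) = 0
  · have hZP := hZ (xP d δ p q)
    have hZM := hZ (xM d δ p q)
    rw [innerC_shift_mask0 d δ hd t _ k hk0] at hZP hZM
    have heq : Zmap L (twoShotMask d δ) a (xP d δ p q) (k, ℓ)
        = Zmap L (twoShotMask d δ) a (xM d δ p q) (k, ℓ) := by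
      rw [hZP, hZM, Complex.norm_conj, Complex.norm_conj,
        abs_xP d δ p q hp hpq, abs_xM d δ p q hp hpq]
    refine ⟨?_, fun _ => heq⟩
    rw [heq]; simp; positivity
  -- case k ≠ 0
  set c : ℕ := maskIdx δ k with hcdef
  obtain ⟨hc1, hc2⟩ := maskIdx_bounds δ k hk0
  have hcd : c < d := by omega
  -- the second index
  set ncv : ℕ := if n0 + c < d then n0 + c else n0 + c - d with hncv
  have hncd : ncv < d := by rw [hncv]; split <;> omega
  have hncor : ncv = n0 + c ∨ (d ≤ n0 + c ∧ ncv = n0 + c - d) := by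
    rw [hncv]; split <;> omega
  have hfinc : intToFin d hd ((c:ℤ) - t) = ⟨ncv, hncd⟩ := by
    rw [intToFin_eq_iff]
    have hco : ((⟨ncv, hncd⟩ : Fin d) : ℤ) = (ncv : ℤ) := rfl
    rw [hco]
    have hsum : (((ℓ:ℕ):ℤ)+1)*a + (n0:ℤ) = (d:ℤ) := by exact_mod_cast hkey
    rcases hncor with hcase | ⟨hge, hcase⟩
    · have he : ((c:ℤ) - t - (ncv : ℤ)) = -(d : ℤ) := by
        rw [ht, hcase]; push_cast; linarith
      rw [he]; exact Int.emod_eq_zero_of_dvd ⟨-1, by ring⟩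
    · have he : ((c:ℤ) - t - (ncv : ℤ)) = 0 := by
        rw [ht, hcase]; push_cast [Nat.cast_sub hge]; push_cast; linarith
      rw [he]; simp
  have hZP := hZ (xP d δ p q)
  have hZM := hZ (xM d δ p q)
  rw [innerC_shift_maskk d δ hd t _ k hk0 hcd, hfin0, hfinc] at hZP hZM
  -- abbreviations for the real values
  set s0 : ℝ := wfun d δ p q n0 with hs0
  set sc : ℝ := wfun d δ p q ncv with hsc
  set σ0 : ℝ := sgfun d δ n0 with hσ0
  set σc : ℝ := sgfun d δ ncv with hσc
  have hxP0 : xP d δ p q ⟨n0, hn0d⟩ = (s0 : ℂ) := rfl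
  have hxPc : xP d δ p q ⟨ncv, hncd⟩ = (sc : ℂ) := rfl
  have hxM0 : xM d δ p q ⟨n0, hn0d⟩ = ((σ0 * s0 : ℝ) : ℂ) := rfl
  have hxMc : xM d δ p q ⟨ncv, hncd⟩ = ((σc * sc : ℝ) : ℂ) := rfl
  rw [hxP0, hxPc, Complex.conj_ofReal, Complex.conj_ofReal] at hZP
  rw [hxM0, hxMc, Complex.conj_ofReal, Complex.conj_ofReal] at hZM
  have hs0p : p ≤ s0 := (wfun_mem d δ p q hp hpq n0).1
  have hscp : p ≤ sc := (wfun_mem d δ p q hp hpq ncv).1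
  have hs0pos : 0 < s0 := lt_of_lt_of_le hp hs0p
  have hscpos : 0 < sc := lt_of_lt_of_le hp hscp
  have hσ0c := sgfun_cases d δ n0
  have hσcc := sgfun_cases d δ ncv
  by_cases hpar : (k:ℕ) % 2 = 1
  · -- μ = 1 : real sums
    have hμ : maskCoef δ k = 1 := by rw [maskCoef, if_pos hpar]
    rw [hμ, one_mul, ← Complex.ofReal_add, Complex.norm_real, Real.norm_eq_abs] at hZP hZM
    -- equal-status implies equality
    have hequal : ((d/2 ≤ n0 ∧ n0 < d - δ) ↔ (d/2 ≤ ncv ∧ ncv < d - δ)) →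
        Zmap L (twoShotMask d δ) a (xP d δ p q) (k, ℓ)
          = Zmap L (twoShotMask d δ) a (xM d δ p q) (k, ℓ) := by
      intro hiff
      have hσeq : σ0 = σc := by
        rw [hσ0, hσc, sgfun, sgfun]
        by_cases hF : d/2 ≤ n0 ∧ n0 < d - δ
        · rw [if_pos hF, if_pos (hiff.mp hF)]
        · rw [if_neg hF, if_neg (fun h => hF (hiff.mpr h))]
      rw [hZP, hZM, ← hσeq]
      have he : σ0 * s0 + σ0 * sc = σ0 * (s0 + sc) := by ring
      rw [he, abs_mul]
      rcases hσ0c with h|h <;> rw [← hσ0] at * <;> rw [h] <;> simp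
    constructor
    · by_cases hiff : ((d/2 ≤ n0 ∧ n0 < d - δ) ↔ (d/2 ≤ ncv ∧ ncv < d - δ))
      · rw [hequal hiff]; simp; positivity
      · -- mixed status: one of the two values is p
        have hpz := geom1 d δ c n0 ncv h2 h4 hc1 hc2 hn0d hncor hiff
        have hminp : min |s0| |sc| ≤ p := by
          rw [abs_of_pos hs0pos, abs_of_pos hscpos]
          rcases hpz with hz | hz
          · have : s0 = p := by rw [hs0, wfun, if_pos hz]
            calc min s0 sc ≤ s0 := min_le_left _ _
              _ = p := this
          · have : sc = p := by rw [hsc, wfun, if_pos hz]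
            calc min s0 sc ≤ sc := min_le_right _ _
              _ = p := this
        rw [hZP, hZM]
        calc |(|s0 + sc| - |σ0 * s0 + σc * sc|)| ≤ 2 * min |s0| |sc| :=
              abs_abs_sub_le s0 sc σ0 σc hσ0c hσcc
          _ ≤ 2 * p := by linarith
    · intro hnb
      exact hequal (geom2 d δ c n0 ncv h2 h4 hc1 hc2 hn0d hncor hnb)
  · -- μ = I : moduli agree
    have hμ : maskCoef δ k = Complex.I := by rw [maskCoef, if_neg hpar]
    rw [hμ] at hZP hZM
    have heq : Zmap L (twoShotMask d δ) a (xP d δ p q) (k, ℓ)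
        = Zmap L (twoShotMask d δ) a (xM d δ p q) (k, ℓ) := by
      rw [hZP, hZM, mul_comm Complex.I, mul_comm Complex.I,
        Complex.norm_add_mul_I, Complex.norm_add_mul_I]
      have h1 : (σ0 * s0)^2 = s0^2 := by rcases hσ0c with h|h <;> rw [← hσ0] at * <;> rw [h] <;> ring
      have h2 : (σc * sc)^2 = sc^2 := by rcases hσcc with h|h <;> rw [← hσc] at * <;> rw [h] <;> ring
      rw [h1, h2]
    refine ⟨?_, fun _ => heq⟩
    rw [heq]; simp; positivity
lemma abs_sq_expand (θ₁ θ₂ u v : ℝ) :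
    ‖Complex.exp (θ₁*Complex.I) * (u:ℂ) - Complex.exp (θ₂*Complex.I) * (v:ℂ)‖^2
      = u^2 + v^2 - 2*(Real.cos θ₁ * Real.cos θ₂ + Real.sin θ₁ * Real.sin θ₂)*(u*v) := by
  rw [Complex.sq_norm]
  simp [Complex.exp_mul_I, Complex.normSq_apply, Complex.cos_ofReal_re, Complex.sin_ofReal_re,
    Complex.cos_ofReal_im, Complex.sin_ofReal_im]
  ring_nf
  nlinarith [Real.sin_sq_add_cos_sq θ₁, Real.sin_sq_add_cos_sq θ₂, sq_nonneg u, sq_nonneg v,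
    sq_nonneg (u*v), sq_nonneg (u+v), sq_nonneg (u-v)]
lemma D2_sum_bound (d δ : ℕ) (p q : ℝ) (hd : 0 < d) (h2 : 2*(d/2) = d) (h4 : 4*δ ≤ d)
    (hp : 0 < p) (hpq : p ≤ q) (θ₁ θ₂ : ℝ) :
    q^2*(d:ℝ) ≤ ∑ n : Fin d,
      ‖Complex.exp (θ₁*Complex.I) * xP d δ p q n
        - Complex.exp (θ₂*Complex.I) * xM d δ p q n‖^2 := by
  set m : ℝ := Real.cos θ₁ * Real.cos θ₂ + Real.sin θ₁ * Real.sin θ₂ with hm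
  have hm1 : |m| ≤ 1 := by
    rw [hm, ← Real.cos_sub]
    exact Real.abs_cos_le_one _
  obtain ⟨hma, hmb⟩ := abs_le.mp hm1
  set g : ℕ → ℝ := fun n => wfun d δ p q n^2 + (sgfun d δ n * wfun d δ p q n)^2
      - 2*m*(wfun d δ p q n * (sgfun d δ n * wfun d δ p q n)) with hg
  have hsum : ∑ n : Fin d,
      ‖Complex.exp (θ₁*Complex.I) * xP d δ p q n
        - Complex.exp (θ₂*Complex.I) * xM d δ p q n‖^2
      = ∑ n ∈ Finset.range d, g n := by
    rw [← Fin.sum_univ_eq_sum_range]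
    refine Finset.sum_congr rfl fun n _ => ?_
    rw [hg]
    exact abs_sq_expand θ₁ θ₂ (wfun d δ p q n) (sgfun d δ n * wfun d δ p q n)
  rw [hsum]
  have hgnn : ∀ n, 0 ≤ g n := by
    intro n
    rw [hg]; dsimp only
    nlinarith [sq_nonneg (wfun d δ p q n - sgfun d δ n * wfun d δ p q n),
      sq_nonneg (wfun d δ p q n + sgfun d δ n * wfun d δ p q n), hma, hmb]
  have hqblock : ∀ n ∈ Finset.Ico 0 (d/2 - δ), g n = 2*q^2 - 2*m*q^2 := by
    intro n hn
    rw [Finset.mem_Ico] at hn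
    have hw : wfun d δ p q n = q := by
      rw [wfun, if_neg]; omega
    have hs : sgfun d δ n = 1 := by
      rw [sgfun, if_neg]; omega
    rw [hg]; dsimp only; rw [hw, hs]; ring
  have hfblock : ∀ n ∈ Finset.Ico (d/2) (d - δ), g n = 2*q^2 + 2*m*q^2 := by
    intro n hn
    rw [Finset.mem_Ico] at hn
    have hw : wfun d δ p q n = q := by
      rw [wfun, if_neg]; omega
    have hs : sgfun d δ n = -1 := by
      rw [sgfun, if_pos]; omega
    rw [hg]; dsimp only; rw [hw, hs]; ring
  have hdisj : Disjoint (Finset.Ico 0 (d/2 - δ)) (Finset.Ico (d/2) (d - δ)) := by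
    rw [Finset.disjoint_left]
    intro n hn hn'
    rw [Finset.mem_Ico] at hn hn'
    omega
  have hsub : Finset.Ico 0 (d/2 - δ) ∪ Finset.Ico (d/2) (d - δ) ⊆ Finset.range d := by
    intro n hn
    rw [Finset.mem_union, Finset.mem_Ico, Finset.mem_Ico] at hn
    rw [Finset.mem_range]
    omega
  have hlow : ∑ n ∈ Finset.Ico 0 (d/2 - δ) ∪ Finset.Ico (d/2) (d - δ), g n
      ≤ ∑ n ∈ Finset.range d, g n :=
    Finset.sum_le_sum_of_subset_of_nonneg hsub (fun n _ _ => hgnn n)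
  rw [Finset.sum_union hdisj] at hlow
  rw [Finset.sum_congr rfl hqblock, Finset.sum_congr rfl hfblock] at hlow
  rw [Finset.sum_const, Finset.sum_const, Nat.card_Ico, Nat.card_Ico] at hlow
  have hc1 : d/2 - δ - 0 = d/2 - δ := by omega
  have hc2 : d - δ - d/2 = d/2 - δ := by omega
  rw [hc1, hc2] at hlow
  refine le_trans ?_ hlow
  rw [nsmul_eq_mul, nsmul_eq_mul]
  have hcast : (d:ℝ) ≤ 4*((d/2 - δ : ℕ):ℝ) := by
    have : d ≤ 4*(d/2 - δ) := by omega
    exact_mod_cast this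
  nlinarith [sq_nonneg q, hcast]
open Finset in
lemma count_interval (L a δ : ℕ) (ha : 1 ≤ a) (haδ : a < δ) (A B : ℕ) (hAB : B ≤ A + δ)
    [DecidablePred fun ℓ : Fin L => A < (L-1-(ℓ:ℕ))*a ∧ (L-1-(ℓ:ℕ))*a < B] :
    (Finset.univ.filter (fun ℓ : Fin L => A < (L-1-(ℓ:ℕ))*a ∧ (L-1-(ℓ:ℕ))*a < B)).card
      ≤ 2*(δ/a) := by
  have ha0 : 0 < a := ha
  have hcard : (Finset.univ.filter
      (fun ℓ : Fin L => A < (L-1-(ℓ:ℕ))*a ∧ (L-1-(ℓ:ℕ))*a < B)).card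
      ≤ (Finset.Ioc (A/a) ((B-1)/a)).card := by
    apply Finset.card_le_card_of_injOn (fun ℓ : Fin L => L-1-(ℓ:ℕ))
    · intro ℓ hℓ
      rw [Finset.mem_coe, Finset.mem_filter] at hℓ
      obtain ⟨-, h1, h2⟩ := hℓ
      rw [Finset.mem_coe, Finset.mem_Ioc]
      constructor
      · exact (Nat.div_lt_iff_lt_mul ha0).mpr h1
      · exact (Nat.le_div_iff_mul_le ha0).mpr (by dsimp only; omega)
    · intro ℓ₁ h₁ ℓ₂ h₂ heq
      rw [Finset.mem_coe, Finset.mem_filter] at h₁ h₂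
      have hL1 : (ℓ₁:ℕ) < L := ℓ₁.isLt
      have hL2 : (ℓ₂:ℕ) < L := ℓ₂.isLt
      have hne1 : 0 < (L-1-(ℓ₁:ℕ))*a := by omega
      have hz1 : (ℓ₁:ℕ) ≤ L - 1 := by omega
      apply Fin.ext
      rcases Nat.eq_zero_or_pos ((L-1-(ℓ₁:ℕ))*a) with h | h
      · omega
      · have : L-1-(ℓ₁:ℕ) = L-1-(ℓ₂:ℕ) := heq
        omega
  rw [Nat.card_Ioc] at hcard
  have hdiv : (B-1)/a - A/a ≤ 2*(δ/a) := by
    have h1 : (B-1) ≤ A + (δ-1) := by omega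
    have h2 : (B-1)/a ≤ (A + (δ-1))/a := Nat.div_le_div_right h1
    have h3 : (A + (δ-1))/a ≤ A/a + (δ-1)/a + 1 := by
      rw [Nat.add_div ha0]
      split <;> omega
    have h4 : (δ-1)/a ≤ δ/a := Nat.div_le_div_right (by omega)
    have h5 : 1 ≤ δ/a := (Nat.one_le_div_iff ha0).mpr (le_of_lt haδ)
    omega
  omega

open Finset in
lemma count_bad (d δ a L : ℕ) (hd : 0 < d) (h2 : 2*(d/2) = d) (h4 : 4*δ ≤ d)
    (ha : 1 ≤ a) (haδ : a < δ) (hdal : d = a*L) (hL : 0 < L)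
    [DecidablePred fun ℓ : Fin L => (d/2 - δ < (L-1-(ℓ:ℕ))*a ∧ (L-1-(ℓ:ℕ))*a < d/2)
        ∨ (d - 2*δ < (L-1-(ℓ:ℕ))*a ∧ (L-1-(ℓ:ℕ))*a < d - δ)] :
    (Finset.univ.filter (fun ℓ : Fin L => (d/2 - δ < (L-1-(ℓ:ℕ))*a ∧ (L-1-(ℓ:ℕ))*a < d/2)
        ∨ (d - 2*δ < (L-1-(ℓ:ℕ))*a ∧ (L-1-(ℓ:ℕ))*a < d - δ))).card ≤ 4*(δ/a) := by
  classical
  have hsplit : (Finset.univ.filter (fun ℓ : Fin L =>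
        (d/2 - δ < (L-1-(ℓ:ℕ))*a ∧ (L-1-(ℓ:ℕ))*a < d/2)
        ∨ (d - 2*δ < (L-1-(ℓ:ℕ))*a ∧ (L-1-(ℓ:ℕ))*a < d - δ))).card
      ≤ (Finset.univ.filter (fun ℓ : Fin L =>
          d/2 - δ < (L-1-(ℓ:ℕ))*a ∧ (L-1-(ℓ:ℕ))*a < d/2)).card
        + (Finset.univ.filter (fun ℓ : Fin L =>
          d - 2*δ < (L-1-(ℓ:ℕ))*a ∧ (L-1-(ℓ:ℕ))*a < d - δ)).card := by
    refine le_trans (Finset.card_le_card ?_) (Finset.card_union_le _ _)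
    intro ℓ hℓ
    simp only [Finset.mem_filter, Finset.mem_union, Finset.mem_univ, true_and] at *
    tauto
  have hb1 := count_interval L a δ ha haδ (d/2 - δ) (d/2) (by omega)
  have hb2 := count_interval L a δ ha haδ (d - 2*δ) (d - δ) (by omega)
  omega
set_option maxHeartbeats 1000000 in
/-- Lower Lipschitz bound for recovery from the `Z`-measurements
with the two-shot masks. -/
theorem lower_lipschitz_Z_twoShot : ∃ C : ℝ, 0 < C ∧
    ∀ (d δ a L : ℕ) (p q CB : ℝ)
      (B : EuclideanSpace ℝ (Fin (2 * δ - 1) × Fin L) → (Fin d → ℂ)),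
      0 < d → Even d → 4 * δ ≤ d → 0 < a → 0 < L → d = a * L → 1 ≤ a → a < δ →
      0 < p → p ≤ q →
      (∀ y y', D2 (B y) (B y') ≤ CB * ‖y - y'‖) →
      (∀ x ∈ Cpq d p q, phaseEquiv (B (Zmap L (twoShotMask d δ) a x)) x) →
      C * q * Real.sqrt ((d : ℝ) * a) / (p * (δ : ℝ)) ≤ CB := by
  classical
  refine ⟨1/6, by norm_num, ?_⟩
  intro d δ a L p q CB B hd hdeven h4δ ha0 hL hdal ha1 haδ hp hpq hLip hRec
  have h2 : 2*(d/2) = d := by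
    obtain ⟨r, hr⟩ := hdeven; omega
  have hδ2 : 2 ≤ δ := by omega
  set y1 := Zmap L (twoShotMask d δ) a (xP d δ p q) with hy1
  set y2 := Zmap L (twoShotMask d δ) a (xM d δ p q) with hy2
  obtain ⟨θ₁, hθ₁⟩ := hRec _ (xP_mem_Cpq d δ p q hp hpq)
  obtain ⟨θ₂, hθ₂⟩ := hRec _ (xM_mem_Cpq d δ p q hp hpq)
  have hlip := hLip y1 y2
  -- lower bound on D2
  have hD2 : Real.sqrt (q^2*(d:ℝ)) ≤ D2 (B y1) (B y2) := by
    apply le_ciInf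
    intro θ
    have heq : (fun n => B y1 n - Complex.exp ((θ:ℂ)*Complex.I) * B y2 n)
        = fun n => Complex.exp (θ₁*Complex.I) * xP d δ p q n
            - Complex.exp (((θ+θ₂ : ℝ) : ℂ)*Complex.I) * xM d δ p q n := by
      funext n
      rw [← hy1] at hθ₁
      rw [← hy2] at hθ₂
      rw [hθ₁, hθ₂]
      dsimp only
      rw [← mul_assoc, ← Complex.exp_add]
      congr 2
      push_cast
      ring
    rw [heq]
    unfold norm2
    apply Real.sqrt_le_sqrt
    exact D2_sum_bound d δ p q hd h2 h4δ hp hpq θ₁ (θ+θ₂)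
  have hCBnn : Real.sqrt (q^2*(d:ℝ)) ≤ CB * ‖y1 - y2‖ := le_trans hD2 hlip
  -- norm estimate
  have hentry := fun (k : Fin (2*δ-1)) (ℓ : Fin L) =>
    Z_entry d δ a L p q hd h2 h4δ ha1 haδ hdal hL hp hpq k ℓ
  have hnormsq : ‖y1 - y2‖^2 = ∑ kl : Fin (2*δ-1) × Fin L, (y1 kl - y2 kl)^2 := by
    rw [EuclideanSpace.norm_eq, Real.sq_sqrt (by positivity)]
    refine Finset.sum_congr rfl fun kl _ => ?_
    rw [PiLp.sub_apply, Real.norm_eq_abs, sq_abs]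
  have hinner : ∀ ℓ : Fin L, ∑ k : Fin (2*δ-1), (y1 (k,ℓ) - y2 (k,ℓ))^2
      ≤ if ((d/2 - δ < (L-1-(ℓ:ℕ))*a ∧ (L-1-(ℓ:ℕ))*a < d/2)
          ∨ (d - 2*δ < (L-1-(ℓ:ℕ))*a ∧ (L-1-(ℓ:ℕ))*a < d - δ))
        then (2*(δ:ℝ))*(4*p^2) else 0 := by
    intro ℓ
    by_cases hb : ((d/2 - δ < (L-1-(ℓ:ℕ))*a ∧ (L-1-(ℓ:ℕ))*a < d/2)
        ∨ (d - 2*δ < (L-1-(ℓ:ℕ))*a ∧ (L-1-(ℓ:ℕ))*a < d - δ))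
    · rw [if_pos hb]
      calc ∑ k : Fin (2*δ-1), (y1 (k,ℓ) - y2 (k,ℓ))^2
          ≤ ∑ _k : Fin (2*δ-1), (2*p)^2 := by
            refine Finset.sum_le_sum fun k _ => ?_
            have h := (hentry k ℓ).1
            rw [← hy1, ← hy2] at h
            nlinarith [abs_nonneg (y1 (k,ℓ) - y2 (k,ℓ)), sq_abs (y1 (k,ℓ) - y2 (k,ℓ))]
        _ = ((2*δ-1 : ℕ):ℝ) * (2*p)^2 := by
            rw [Finset.sum_const, Finset.card_univ, Fintype.card_fin, nsmul_eq_mul]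
        _ ≤ (2*(δ:ℝ)) * (4*p^2) := by
            have hle : ((2*δ-1:ℕ):ℝ) ≤ 2*(δ:ℝ) := by
              have : (2*δ-1:ℕ) ≤ 2*δ := by omega
              calc ((2*δ-1:ℕ):ℝ) ≤ ((2*δ:ℕ):ℝ) := by exact_mod_cast this
                _ = 2*(δ:ℝ) := by push_cast; ring
            nlinarith [sq_nonneg p]
    · rw [if_neg hb]
      have hz : ∀ k : Fin (2*δ-1), (y1 (k,ℓ) - y2 (k,ℓ))^2 = 0 := by
        intro k
        have h := (hentry k ℓ).2 hb
        rw [← hy1, ← hy2] at h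
        rw [h]
        ring
      rw [Finset.sum_congr rfl (fun k _ => hz k), Finset.sum_const, smul_zero]
  have hcount := count_bad d δ a L hd h2 h4δ ha1 haδ hdal hL
  have hnorm2 : ‖y1 - y2‖^2 ≤ 32*(δ:ℝ)^2*p^2/(a:ℝ) := by
    rw [hnormsq, Fintype.sum_prod_type, Finset.sum_comm]
    have hstep : ∑ ℓ : Fin L, ∑ k : Fin (2*δ-1), (y1 (k,ℓ) - y2 (k,ℓ))^2
        ≤ ∑ ℓ : Fin L, (if ((d/2 - δ < (L-1-(ℓ:ℕ))*a ∧ (L-1-(ℓ:ℕ))*a < d/2)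
            ∨ (d - 2*δ < (L-1-(ℓ:ℕ))*a ∧ (L-1-(ℓ:ℕ))*a < d - δ))
          then (2*(δ:ℝ))*(4*p^2) else 0) :=
      Finset.sum_le_sum fun ℓ _ => hinner ℓ
    refine le_trans hstep ?_
    rw [Finset.sum_ite, Finset.sum_const, Finset.sum_const_zero, add_zero, nsmul_eq_mul]
    have hNb : ((Finset.univ.filter (fun ℓ : Fin L =>
        (d/2 - δ < (L-1-(ℓ:ℕ))*a ∧ (L-1-(ℓ:ℕ))*a < d/2)
        ∨ (d - 2*δ < (L-1-(ℓ:ℕ))*a ∧ (L-1-(ℓ:ℕ))*a < d - δ))).card : ℝ)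
        ≤ 4*((δ:ℝ)/(a:ℝ)) := by
      have hc2 : ((4*(δ/a) : ℕ):ℝ) ≤ 4*((δ:ℝ)/(a:ℝ)) := by
        push_cast
        have := Nat.cast_div_le (m := δ) (n := a) (α := ℝ)
        linarith
      refine le_trans ?_ hc2
      exact_mod_cast hcount
    have hppos : (0:ℝ) ≤ (2*(δ:ℝ))*(4*p^2) := by positivity
    have ha' : (0:ℝ) < a := by exact_mod_cast ha0
    calc (_ : ℝ) ≤ (4*((δ:ℝ)/(a:ℝ))) * ((2*(δ:ℝ))*(4*p^2)) :=
          mul_le_mul_of_nonneg_right hNb hppos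
      _ = 32*(δ:ℝ)^2*p^2/(a:ℝ) := by field_simp; ring
  -- conclude
  have hd' : (0:ℝ) < d := by exact_mod_cast hd
  have ha' : (0:ℝ) < a := by exact_mod_cast ha0
  have hδ' : (0:ℝ) < δ := by exact_mod_cast (by omega : 0 < δ)
  have hq : (0:ℝ) < q := lt_of_lt_of_le hp hpq
  have hCBpos : 0 < CB := by
    have hpos : 0 < Real.sqrt (q^2*(d:ℝ)) :=
      Real.sqrt_pos.mpr (mul_pos (pow_pos hq 2) hd')
    nlinarith [norm_nonneg (y1 - y2), hCBnn]
  have hqd : q^2*(d:ℝ) ≤ CB^2 * (32*(δ:ℝ)^2*p^2/(a:ℝ)) := by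
    have h1 : q^2*(d:ℝ) ≤ (CB*‖y1-y2‖)^2 := by
      rw [← Real.sq_sqrt (show (0:ℝ) ≤ q^2*(d:ℝ) by positivity)]
      exact pow_le_pow_left₀ (Real.sqrt_nonneg _) hCBnn 2
    calc q^2*(d:ℝ) ≤ (CB*‖y1-y2‖)^2 := h1
      _ = CB^2 * ‖y1-y2‖^2 := by ring
      _ ≤ CB^2 * (32*(δ:ℝ)^2*p^2/(a:ℝ)) :=
          mul_le_mul_of_nonneg_left hnorm2 (sq_nonneg CB)
  have hX2 : (1/6 * q * Real.sqrt ((d:ℝ)*a) / (p*(δ:ℝ)))^2 ≤ CB^2 := by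
    have hs : (Real.sqrt ((d:ℝ)*a))^2 = (d:ℝ)*a := Real.sq_sqrt (by positivity)
    have hexp : (1/6 * q * Real.sqrt ((d:ℝ)*a) / (p*(δ:ℝ)))^2
        = (1/36) * q^2 * ((d:ℝ)*a) / (p^2*(δ:ℝ)^2) := by
      rw [div_pow, mul_pow, mul_pow, hs, mul_pow]
      norm_num
    rw [hexp]
    rw [div_le_iff₀ (mul_pos (pow_pos hp 2) (pow_pos hδ' 2))]
    have h32 : q^2*(d:ℝ)*(a:ℝ) ≤ 32*CB^2*(δ:ℝ)^2*p^2 := by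
      have := mul_le_mul_of_nonneg_right hqd (le_of_lt ha')
      have hcancel : CB^2 * (32*(δ:ℝ)^2*p^2/(a:ℝ)) * (a:ℝ) = 32*CB^2*(δ:ℝ)^2*p^2 := by
        field_simp
      rw [hcancel] at this
      linarith
    nlinarith [sq_nonneg CB, sq_nonneg q, hd'.le, ha'.le]
  calc 1/6 * q * Real.sqrt ((d:ℝ)*a) / (p*(δ:ℝ))
      = Real.sqrt ((1/6 * q * Real.sqrt ((d:ℝ)*a) / (p*(δ:ℝ)))^2) := by
        rw [Real.sqrt_sq (by positivity)]
    _ ≤ Real.sqrt (CB^2) := Real.sqrt_le_sqrt hX2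
    _ = CB := Real.sqrt_sq hCBpos.le
end
end

section
/- Let d be an even positive integer and let δ ≤ d/4 be a positive integer. Define x⁺, x⁻ ∈ ℂ^d by x^{±}(n) = 1 for 1 ≤ n ≤ d/2 − δ, x^{±}(n) = 0 for d/2 − δ < n ≤ d/2, x^{±}(n) = ±1 for d/2 < n ≤ d − δ, and x^{±}(n) = 0 for d − δ < n ≤ d. Then: (i) there is no θ ∈ ℝ with x⁺ = e^{iθ}x⁻ (i.e., x⁺ ≁ x⁻); and (ii) for every m ∈ ℂ^d whose nonzero entries all lie in positions {1,…,δ} and every ℓ ∈ ℤ, |⟨S_ℓ m, x⁺⟩| = |⟨S_ℓ m, x⁻⟩|. Consequently Z(x⁺) = Z(x⁻) and Y(x⁺) = Y(x⁻) for any family of such masks and any choice of shifts, so Y and Z are not injective on ℂ^d/∼. -/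
open scoped BigOperators

noncomputable section

/-- The vectors `x^{±}` with unit entries (sign `ε = ±1`): `1` on positions
`1,…,d/2-δ`, `0` on `d/2-δ+1,…,d/2`, `±1` on `d/2+1,…,d-δ`, `0` on `d-δ+1,…,d`. -/
def xpmUnit (d δ : ℕ) (ε : ℝ) : Fin d → ℂ :=
  fun i => if (i : ℕ) < d / 2 - δ then 1
    else if (i : ℕ) < d / 2 then 0
    else if (i : ℕ) < d - δ then ((ε : ℝ) : ℂ)
    else 0

lemma window_disjoint (d δ : ℕ) (hd0 : 0 < d) (hd : Even d) (hδ : 0 < δ)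
    (ℓ : ℤ) (a b : ℕ) (ha : a < d / 2 - δ) (hb1 : d / 2 ≤ b) (hb2 : b < d - δ)
    (hwa : (((a : ℤ) + ℓ) % d).toNat < δ) (hwb : (((b : ℤ) + ℓ) % d).toNat < δ) : False := by
  obtain ⟨md, hmd⟩ := hd
  have hdz : (d : ℤ) ≠ 0 := by exact_mod_cast hd0.ne'
  set u := ((a : ℤ) + ℓ) % d with hu
  set v := ((b : ℤ) + ℓ) % d with hv
  have hu0 : 0 ≤ u := Int.emod_nonneg _ hdz
  have hv0 : 0 ≤ v := Int.emod_nonneg _ hdz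
  have huδ : u < δ := by omega
  have hvδ : v < δ := by omega
  have d1 : (d : ℤ) ∣ ((a : ℤ) + ℓ - u) := Int.dvd_self_sub_of_emod_eq rfl
  have d2 : (d : ℤ) ∣ ((b : ℤ) + ℓ - v) := Int.dvd_self_sub_of_emod_eq rfl
  obtain ⟨k, hk⟩ := dvd_sub d2 d1
  have hk' : (b : ℤ) - a - (v - u) = d * k := by linarith [hk]
  have hb1' : (1 : ℤ) ≤ d * k := by rw [← hk']; omega
  have hb2' : (d : ℤ) * k < d := by rw [← hk']; omega
  rcases le_or_gt k 0 with h | h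
  · have : (d : ℤ) * k ≤ 0 := mul_nonpos_of_nonneg_of_nonpos (by positivity) h
    omega
  · have : (d : ℤ) ≤ d * k := le_mul_of_one_le_right (by positivity) h
    omega

lemma key_abs_eq (d δ : ℕ) (hd0 : 0 < d) (hd : Even d) (hδ : 0 < δ) (hδd : 4 * δ ≤ d)
    (m : Fin d → ℂ) (hm : ∀ n, m n ≠ 0 → (n : ℕ) < δ) (ℓ : ℤ) :
    ‖innerC (shift ℓ m) (xpmUnit d δ 1)‖
      = ‖innerC (shift ℓ m) (xpmUnit d δ (-1))‖ := by
  have hW : ∀ n : Fin d, shift ℓ m n ≠ 0 → (((n : ℤ) + ℓ) % d).toNat < δ := by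
    intro n hn
    exact hm _ hn
  by_cases hB : ∃ b : Fin d, shift ℓ m b ≠ 0 ∧ d / 2 ≤ (b : ℕ) ∧ (b : ℕ) < d - δ
  · obtain ⟨b, hb0, hb1, hb2⟩ := hB
    have key : ∀ n : Fin d, shift ℓ m n ≠ 0 →
        xpmUnit d δ 1 n = - xpmUnit d δ (-1) n := by
      intro n hn
      have hnb : ¬ ((n : ℕ) < d / 2 - δ) := fun h =>
        window_disjoint d δ hd0 hd hδ ℓ n b h hb1 hb2 (hW n hn) (hW b hb0)
      unfold xpmUnit
      rw [if_neg hnb, if_neg hnb]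
      by_cases h1 : (n : ℕ) < d / 2
      · simp [h1]
      · rw [if_neg h1, if_neg h1]
        by_cases h2 : (n : ℕ) < d - δ
        · simp [h2]
        · simp [h2]
    have hsum : innerC (shift ℓ m) (xpmUnit d δ 1)
        = - innerC (shift ℓ m) (xpmUnit d δ (-1)) := by
      unfold innerC
      rw [← Finset.sum_neg_distrib]
      refine Finset.sum_congr rfl fun n _ => ?_
      by_cases h : shift ℓ m n = 0
      · simp [h]
      · rw [key n h]
        simp [mul_neg]
    rw [hsum, norm_neg]
  · push_neg at hB
    have key : ∀ n : Fin d, shift ℓ m n ≠ 0 →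
        xpmUnit d δ 1 n = xpmUnit d δ (-1) n := by
      intro n hn
      have h3 := hB n hn
      unfold xpmUnit
      by_cases h0 : (n : ℕ) < d / 2 - δ
      · simp [h0]
      · rw [if_neg h0, if_neg h0]
        by_cases h1 : (n : ℕ) < d / 2
        · simp [h1]
        · have h2 : ¬ ((n : ℕ) < d - δ) := by have := h3 (by omega); omega
          rw [if_neg h1, if_neg h1, if_neg h2, if_neg h2]
    have hsum : innerC (shift ℓ m) (xpmUnit d δ 1)
        = innerC (shift ℓ m) (xpmUnit d δ (-1)) := by
      unfold innerC
      refine Finset.sum_congr rfl fun n _ => ?_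
      by_cases h : shift ℓ m n = 0
      · simp [h]
      · rw [key n h]
    rw [hsum]

/-- The vectors `x⁺ ≁ x⁻`, yet every locally supported mask produces
identical magnitude measurements of them, so `Y` and `Z` are not injective on `ℂ^d/∼`. -/
theorem not_injective (d δ : ℕ) (hd0 : 0 < d) (hd : Even d) (hδ : 0 < δ) (hδd : 4 * δ ≤ d) :
    (¬ phaseEquiv (xpmUnit d δ 1) (xpmUnit d δ (-1))) ∧
    (∀ m : Fin d → ℂ, (∀ n, m n ≠ 0 → (n : ℕ) < δ) → ∀ ℓ : ℤ,
      ‖innerC (shift ℓ m) (xpmUnit d δ 1)‖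
        = ‖innerC (shift ℓ m) (xpmUnit d δ (-1))‖) ∧
    (∀ (K L a : ℕ) (m : Fin K → Fin d → ℂ), (∀ k n, m k n ≠ 0 → (n : ℕ) < δ) →
      Zmap L m a (xpmUnit d δ 1) = Zmap L m a (xpmUnit d δ (-1)) ∧
      Ymap L m a (xpmUnit d δ 1) = Ymap L m a (xpmUnit d δ (-1))) := by
  obtain ⟨md, hmd⟩ := hd
  refine ⟨?_, ?_, ?_⟩
  · rintro ⟨θ, hθ⟩
    have h1 : (0 : ℕ) < d / 2 - δ := by omega
    have h2 : d / 2 < d - δ := by omega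
    have e0 := congrFun hθ ⟨0, hd0⟩
    have e1 := congrFun hθ ⟨d / 2, by omega⟩
    simp only [xpmUnit] at e0 e1
    rw [if_pos h1, if_pos h1] at e0
    rw [if_neg (by omega), if_neg (by omega), if_pos h2,
        if_neg (by omega), if_neg (by omega), if_pos h2] at e1
    simp only [mul_one] at e0
    rw [← e0] at e1
    norm_num at e1
  · intro m hm ℓ
    exact key_abs_eq d δ hd0 ⟨md, hmd⟩ hδ hδd m hm ℓ
  · intro K L a m hm
    constructor
    · ext kl
      exact key_abs_eq d δ hd0 ⟨md, hmd⟩ hδ hδd (m kl.1) (hm kl.1) _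
    · ext kl
      simp only [Ymap, WithLp.ofLp_toLp]
      rw [
        key_abs_eq d δ hd0 ⟨md, hmd⟩ hδ hδd (m kl.1) (hm kl.1) ((((kl.2 : ℕ) + 1) * a : ℕ) : ℤ)]
end
end
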